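/- arXiv:2401.16342 — 3 statements merged into one kernel-verified Lean document; each statement's English description precedes it below -/
import Mathlib

section
/- Concentration of the number of true islands (Lemma 1): Fix constants c > 0, L̄ > 0 and δ ∈ [0,1), and work in the asymptotic regime of the SSE model. Let K′ denote the number of true islands. Then for every ε > 0, Pr( |K′ − K(n)·e^{−c}| ≥ ε·K(n)·e^{−c} ) → 0 as n → ∞. -/
open Filter

noncomputable section

/-- Index family for the joint independence of starts and erasure indicators. -/
def sseType (n K L : ℕ) : Fin K ⊕ (Fin K × Fin L) → Type
  | .inl _ => ZMod n
  | .inr _ => Bool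

/-- Measurable-space structure on the index family (discrete σ-algebras). -/
def sseTypeMS (n K L : ℕ) : ∀ t : Fin K ⊕ (Fin K × Fin L), MeasurableSpace (sseType n K L t)
  | .inl _ => inferInstanceAs (MeasurableSpace (ZMod n))
  | .inr _ => inferInstanceAs (MeasurableSpace Bool)

/-- The combined family of random variables (starts and erasure indicators). -/
def sseVars {Ω : Type} {n K L : ℕ} (S : Fin K → Ω → ZMod n) (E : Fin K → Fin L → Ω → Bool) :
    ∀ t : Fin K ⊕ (Fin K × Fin L), Ω → sseType n K L t
  | .inl i => S i
  | .inr p => E p.1 p.2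

/-- The shotgun-sequencing-with-erasures (SSE) probabilistic model:
start positions `S 1, …, S K` i.i.d. uniform on `ZMod n`, erasure indicators `E i j`
i.i.d. Bernoulli(δ), with all of them jointly independent. -/
structure SSE (n K L : ℕ) (δ : ℝ) where
  Ω : Type
  [mΩ : MeasurableSpace Ω]
  μ : MeasureTheory.Measure Ω
  isProb : MeasureTheory.IsProbabilityMeasure μ
  S : Fin K → Ω → ZMod n
  E : Fin K → Fin L → Ω → Bool
  measS : ∀ i, Measurable (S i)
  measE : ∀ i j, Measurable (E i j)
  unifS : ∀ i s, μ {ω | S i ω = s} = (n : ENNReal)⁻¹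
  bernE : ∀ i j, μ {ω | E i j ω = true} = ENNReal.ofReal δ
  indep : ProbabilityTheory.iIndepFun (m := sseTypeMS n K L) (sseVars S E) μ

attribute [instance] SSE.mΩ
attribute [instance] SSE.isProb

/-- SSE model together with a uniformly random input string, independent of the
starts and erasures. -/
structure SSEX (n K L : ℕ) (δ : ℝ) extends SSE n K L δ where
  X : Ω → (ZMod n → Bool)
  measX : Measurable X
  unifX : ∀ v : ZMod n → Bool, μ {ω | X ω = v} = ((2 : ENNReal) ^ n)⁻¹
  indepX : ProbabilityTheory.IndepFun X (fun ω => (fun i => S i ω, fun i j => E i j ω)) μ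

/-- SSE model together with a uniformly random message `W` on `{1,…,Mn}`
(modelled as `Fin Mn`), independent of the starts and erasures. -/
structure SSEW (n K L : ℕ) (δ : ℝ) (Mn : ℕ) extends SSE n K L δ where
  W : Ω → Fin Mn
  measW : Measurable W
  unifW : ∀ w, μ {ω | W ω = w} = (Mn : ENNReal)⁻¹
  indepW : ProbabilityTheory.IndepFun W (fun ω => (fun i => S i ω, fun i j => E i j ω)) μ

variable {n K L : ℕ} {δ : ℝ}

/-- Read `i`: the `L`-length cyclic substring of `x` starting at `S i`, with erased
symbols replaced by `none` (= ⊥). -/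
def SSE.read (M : SSE n K L δ) (x : ZMod n → Bool) (ω : M.Ω) (i : Fin K) :
    Fin L → Option Bool :=
  fun j => if M.E i j ω then none else some (x (M.S i ω + ((j : ℕ) : ZMod n)))

/-- The channel output: the multiset of the `K` reads. -/
def SSE.output (M : SSE n K L δ) (x : ZMod n → Bool) (ω : M.Ω) :
    Multiset (Fin L → Option Bool) :=
  Finset.univ.val.map (M.read x ω)

/-- Position `m` is visibly covered: some read covers it with an unerased symbol. -/
def SSE.VisiblyCovered (M : SSE n K L δ) (ω : M.Ω) (m : ZMod n) : Prop :=
  ∃ (i : Fin K) (j : Fin L), M.S i ω + ((j : ℕ) : ZMod n) = m ∧ M.E i j ω = false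

/-- The number 𝒫 of visibly covered positions. -/
def SSE.coveredCount (M : SSE n K L δ) (ω : M.Ω) : ℕ :=
  Set.ncard {m : ZMod n | M.VisiblyCovered ω m}

/-- The visible coverage Φ_v: the fraction of the `n` positions that are visibly covered. -/
def SSE.Phi (M : SSE n K L δ) (ω : M.Ω) : ℝ := (M.coveredCount ω : ℝ) / n

/-- The number of true islands: the number of reads `i` such that no other read `j`
has its start in the cyclic window `{S i, S i + 1, …, S i + L - 1}`. -/
def SSE.trueIslandCount (M : SSE n K L δ) (ω : M.Ω) : ℕ :=
  (Finset.univ.filter (fun i : Fin K =>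
    ∀ j : Fin K, j ≠ i → ∀ l : Fin L, M.S j ω ≠ M.S i ω + ((l : ℕ) : ZMod n))).card

/-- Cyclic distance from read `i` to read `j` in the true ordering
(reads ordered cyclically by start position, ties broken by index). -/
def SSE.dist (M : SSE n K L δ) (ω : M.Ω) (i j : Fin K) : ℕ :=
  if (M.S j ω - M.S i ω).val = 0 then (if i < j then 0 else n)
  else (M.S j ω - M.S i ω).val

/-- The cyclic gap `g_i` from the start of read `i` to the start of its true successor. -/
def SSE.trueGap (M : SSE n K L δ) (ω : M.Ω) (i : Fin K) : ℕ :=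
  if h : (Finset.univ.erase i).Nonempty then
    ((Finset.univ.erase i).image (fun j => M.dist ω i j)).min' (h.image _)
  else n

/-- The true overlap `o_i = max (0, L − g_i)` of read `i` with its true successor. -/
def SSE.trueOverlap (M : SSE n K L δ) (ω : M.Ω) (i : Fin K) : ℕ := L - M.trueGap ω i

/-- The true merging suffix size `ω^t_i`: the number of unerased symbols among the last
`o_i` symbols of read `i` (`0` if `o_i = 0`). -/
def SSE.suffixSize (M : SSE n K L δ) (ω : M.Ω) (i : Fin K) : ℕ :=
  (Finset.univ.filter (fun j : Fin L =>
    L - M.trueOverlap ω i ≤ (j : ℕ) ∧ M.E i j ω = false)).card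

open Classical in
/-- `G(τ)`: the number of reads whose true merging suffix size equals `τ·log₂ n`. -/
def SSE.G (M : SSE n K L δ) (ω : M.Ω) (τ : ℝ) : ℕ :=
  (Finset.univ.filter (fun i : Fin K =>
    (M.suffixSize ω i : ℝ) = τ * Real.logb 2 n)).card

/-- Read length in the asymptotic regime: `L(n) = ⌈Lbar log₂ n⌉`. -/
def Lof (Lbar : ℝ) (n : ℕ) : ℕ := ⌈Lbar * Real.logb 2 n⌉₊

/-- Number of reads in the asymptotic regime: `K(n) = ⌈c n / L(n)⌉`. -/
def Kof (c Lbar : ℝ) (n : ℕ) : ℕ := ⌈c * (n : ℝ) / (Lof Lbar n : ℝ)⌉₊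

/-- `z` (a string with erasures, `none` = ⊥) matches `x` at position `s`: every unerased
symbol of `z` agrees with the corresponding (cyclic) symbol of `x`. -/
def ZMatches {n : ℕ} (x : ZMod n → Bool) {l : ℕ} (z : Fin l → Option Bool)
    (s : ZMod n) : Prop :=
  ∀ (j : Fin l) (b : Bool), z j = some b → x (s + ((j : ℕ) : ZMod n)) = b

open Classical in
/-- `M_z`: the number of reads whose window matches `z`. -/
def SSEX.Mz (M : SSEX n K L δ) (ω : M.Ω) {l : ℕ} (z : Fin l → Option Bool) : ℕ :=
  (Finset.univ.filter (fun i : Fin K => ZMatches (M.X ω) z (M.S i ω))).card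

/-- `size(z)`: the number of unerased symbols of `z`. -/
def sizeZ {l : ℕ} (z : Fin l → Option Bool) : ℕ :=
  (Finset.univ.filter (fun j : Fin l => z j ≠ none)).card

/-- `τ_ue(z) = size(z) / log₂ n`. -/
def tauUE (n : ℕ) {l : ℕ} (z : Fin l → Option Bool) : ℝ :=
  (sizeZ z : ℝ) / Real.logb 2 n

/-- The probability of a decoding error for a given encoder/decoder pair, when the
transmitted codeword is `enc W`. -/
def SSEW.errProb {n K L : ℕ} {δ : ℝ} {Mn : ℕ} (M : SSEW n K L δ Mn)
    (enc : Fin Mn → (ZMod n → Bool))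
    (dec : Multiset (Fin L → Option Bool) → Fin Mn) : ℝ :=
  (M.μ {ω | dec (M.toSSE.output (enc (M.W ω)) ω) ≠ M.W ω}).toReal

/-- The β(d) penalty function, with `α = c/(Lbar(1−δ))`. -/
def betaFn (c Lbar δ : ℝ) (d : ℝ) : ℝ :=
  (d / (1 - δ)) * (c / Lbar) ^ 2 * Real.exp (-c) *
    (Real.exp (c / (Lbar * (1 - δ)) * d) * (Real.exp (c / (Lbar * (1 - δ))) - 1) /
        (Real.exp (c / (Lbar * (1 - δ)) * d) - 1) -
      Real.exp (2 * (c / (Lbar * (1 - δ))) * d) *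
          ((Real.exp (c / (Lbar * (1 - δ)) * (1 + d)) - Real.exp (c / (Lbar * (1 - δ)))) -
            d * (Real.exp (c / (Lbar * (1 - δ)) * (1 + d)) - 1)) /
        (Real.exp (c / (Lbar * (1 - δ)) * d) - 1) ^ 2)


/-! ### Auxiliary development for the concentration proof -/

open MeasureTheory ProbabilityTheory

section Win
variable {n L : ℕ} [NeZero n]

/-- The window of length `L` starting at `s`. -/
def win (L : ℕ) (s : ZMod n) : Finset (ZMod n) :=
  Finset.image (fun l : Fin L => s + ((l : ℕ) : ZMod n)) Finset.univ

lemma mem_win_iff {s t : ZMod n} :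
    t ∈ win L s ↔ ∃ l : Fin L, t = s + ((l : ℕ) : ZMod n) := by simp [win, eq_comm]

lemma win_card (hLn : L ≤ n) (s : ZMod n) : (win L s).card = L := by
  rw [win, Finset.card_image_of_injective _ ?_, Finset.card_univ, Fintype.card_fin]
  intro a b hab
  have h : ((a : ℕ) : ZMod n) = ((b : ℕ) : ZMod n) := add_left_cancel hab
  have := congrArg ZMod.val h
  rwa [ZMod.val_cast_of_lt (lt_of_lt_of_le a.isLt hLn),
    ZMod.val_cast_of_lt (lt_of_lt_of_le b.isLt hLn), ← Fin.ext_iff] at this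

lemma win_disjoint {s t : ZMod n} (hst : t ∉ win L s) (hts : s ∉ win L t) :
    Disjoint (win L s) (win L t) := by
  rw [Finset.disjoint_left]
  rintro x hx hy
  simp only [win, Finset.mem_image, Finset.mem_univ, true_and] at hx hy
  obtain ⟨a, ha⟩ := hx
  obtain ⟨b, hb⟩ := hy
  rcases le_or_gt (b : ℕ) (a : ℕ) with hba | hab
  · apply hst
    have heq : t = s + (((a : ℕ) - (b : ℕ) : ℕ) : ZMod n) := by
      push_cast [Nat.cast_sub hba]
      have h2 : s + (a : ℕ) = t + (b : ℕ) := by rw [ha, hb]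
      linear_combination -h2
    rw [win, Finset.mem_image]
    exact ⟨⟨(a : ℕ) - (b : ℕ), lt_of_le_of_lt (Nat.sub_le _ _) a.isLt⟩, by
      simpa using heq.symm⟩
  · apply hts
    have heq : s = t + (((b : ℕ) - (a : ℕ) : ℕ) : ZMod n) := by
      push_cast [Nat.cast_sub hab.le]
      have h2 : s + (a : ℕ) = t + (b : ℕ) := by rw [ha, hb]
      linear_combination h2
    rw [win, Finset.mem_image]
    exact ⟨⟨(b : ℕ) - (a : ℕ), lt_of_le_of_lt (Nat.sub_le _ _) b.isLt⟩, by
      simpa using heq.symm⟩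

end Win

section Core
variable {n K L : ℕ} {δ : ℝ} (M : SSE n K L δ)

/-- Product formula for the start variables. -/
lemma SSE.meas_iInter_S (T : Finset (Fin K)) (F : Fin K → Set (ZMod n)) :
    M.μ (⋂ j ∈ T, (M.S j)⁻¹' (F j)) = ∏ j ∈ T, M.μ ((M.S j)⁻¹' (F j)) := by
  classical
  set sets : ∀ t : Fin K ⊕ (Fin K × Fin L), Set (sseType n K L t) :=
    fun t => match t with
      | .inl j => if j ∈ T then F j else Set.univ
      | .inr _ => Set.univ with hsets
  have h := M.indep.meas_iInter (s := fun t => sseVars M.S M.E t ⁻¹' sets t) ?_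
  · have hL : (⋂ t, sseVars M.S M.E t ⁻¹' sets t) = ⋂ j ∈ T, (M.S j)⁻¹' (F j) := by
      ext ω
      simp only [Set.mem_iInter, Set.mem_preimage]
      constructor
      · intro h j hj
        have := h (.inl j)
        have h' : M.S j ω ∈ (if j ∈ T then F j else Set.univ) := this
        simpa [hj] using h'
      · intro h t
        match t with
        | .inl j =>
          by_cases hj : j ∈ T
          · show M.S j ω ∈ (if j ∈ T then F j else Set.univ)
            simpa [hj] using h j hj
          · show M.S j ω ∈ (if j ∈ T then F j else Set.univ)
            simp [hj]
        | .inr p => exact Set.mem_univ _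
    rw [hL] at h
    rw [h, Fintype.prod_sum_type]
    have h2 : ∀ p : Fin K × Fin L, M.μ (sseVars M.S M.E (.inr p) ⁻¹' sets (.inr p)) = 1 := by
      intro p; simp [hsets, sseVars, measure_univ]
      exact measure_univ
    simp only [h2, Finset.prod_const_one, mul_one]
    rw [← Finset.prod_filter_mul_prod_filter_not Finset.univ (· ∈ T)]
    have h3 : ∀ j ∈ Finset.univ.filter (· ∉ T),
        M.μ (sseVars M.S M.E (.inl j) ⁻¹' sets (.inl j)) = 1 := by
      intro j hj
      simp only [Finset.mem_filter] at hj
      simp [hsets, sseVars, hj.2, measure_univ]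
      exact measure_univ
    rw [Finset.prod_congr rfl h3, Finset.prod_const_one, mul_one]
    rw [Finset.filter_mem_eq_inter, Finset.univ_inter]
    refine Finset.prod_congr rfl fun j hj => ?_
    simp [hsets, sseVars, hj]
    rfl
  · intro t
    match t with
    | .inl j =>
      refine ⟨sets (.inl j), trivial, rfl⟩
    | .inr p => exact ⟨Set.univ, MeasurableSet.univ, rfl⟩

lemma SSE.meas_S_mem (j : Fin K) (F : Finset (ZMod n)) :
    M.μ ((M.S j) ⁻¹' F) = F.card * (n : ENNReal)⁻¹ := by
  classical
  have hre : ((M.S j) ⁻¹' F : Set M.Ω) = ⋃ s ∈ F, (M.S j) ⁻¹' {s} := by ext ω; simp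
  rw [hre, measure_biUnion_finset ?_ (fun s _ => M.measS j (measurableSet_singleton s))]
  · have h1 : ∀ s ∈ F, M.μ ((M.S j) ⁻¹' {s}) = (n : ENNReal)⁻¹ := by
      intro s _
      have := M.unifS j s
      simpa [Set.preimage, Set.mem_singleton_iff] using this
    rw [Finset.sum_congr rfl h1, Finset.sum_const, nsmul_eq_mul]
  · intro a _ b _ hab
    exact Set.disjoint_iff_forall_ne.2
      (by rintro x hx y hy rfl; exact hab (by
        simp only [Set.mem_preimage, Set.mem_singleton_iff] at hx hy; rw [← hx, ← hy]))

/-- The island event for read `i`. -/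
def SSE.isl (i : Fin K) : Set M.Ω :=
  {ω | ∀ j, j ≠ i → ∀ l : Fin L, M.S j ω ≠ M.S i ω + ((l : ℕ) : ZMod n)}

variable [NeZero n]

lemma SSE.isl_eq (i : Fin K) :
    M.isl i = ⋃ s : ZMod n, ((M.S i) ⁻¹' {s} ∩
      ⋂ j ∈ Finset.univ.erase i, (M.S j) ⁻¹' ((win L s)ᶜ : Finset (ZMod n))) := by
  ext ω
  simp only [SSE.isl, Set.mem_setOf_eq, Set.mem_iUnion, Set.mem_inter_iff, Set.mem_preimage,
    Set.mem_iInter, Set.mem_singleton_iff, Finset.mem_erase, Finset.mem_univ, and_true,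
    Finset.coe_sort_coe, Finset.mem_coe, Finset.mem_compl, mem_win_iff]
  constructor
  · intro h
    exact ⟨M.S i ω, rfl, fun j hj => by rintro ⟨l, hl⟩; exact h j hj l hl⟩
  · rintro ⟨s, hs, h⟩ j hj l hl
    exact h j hj ⟨l, by rw [← hs]; exact hl⟩

lemma SSE.isl_measurable (i : Fin K) : MeasurableSet (M.isl i) := by
  rw [M.isl_eq i]
  refine MeasurableSet.iUnion fun s => (M.measS i trivial).inter ?_
  exact MeasurableSet.biInter (Finset.countable_toSet _) fun j _ => M.measS j trivial

lemma SSE.meas_isl (hLn : L ≤ n) (i : Fin K) :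
    M.μ (M.isl i) = (((n - L : ℕ) : ENNReal) * (n : ENNReal)⁻¹) ^ (K - 1) := by
  classical
  rw [M.isl_eq i]
  have hdisj : Pairwise (Function.onFun Disjoint fun s : ZMod n =>
      ((M.S i) ⁻¹' {s} ∩ ⋂ j ∈ Finset.univ.erase i,
        (M.S j) ⁻¹' ((win L s)ᶜ : Finset (ZMod n)))) := by
    intro a b hab
    refine Set.disjoint_left.2 fun ω hω hω' => hab ?_
    have h1 : M.S i ω = a := hω.1
    have h2 : M.S i ω = b := hω'.1
    rw [← h1, ← h2]
  rw [measure_iUnion hdisj (fun s => (M.measS i trivial).inter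
    (MeasurableSet.biInter (Finset.countable_toSet _) fun j _ => M.measS j trivial))]
  have hterm : ∀ s : ZMod n,
      M.μ ((M.S i) ⁻¹' {s} ∩ ⋂ j ∈ Finset.univ.erase i,
        (M.S j) ⁻¹' ((win L s)ᶜ : Finset (ZMod n))) =
      (n : ENNReal)⁻¹ * (((n - L : ℕ) : ENNReal) * (n : ENNReal)⁻¹) ^ (K - 1) := by
    intro s
    set F : Fin K → Set (ZMod n) := fun j =>
      if j = i then {s} else (((win L s)ᶜ : Finset (ZMod n)) : Set (ZMod n)) with hF
    have huniv : (Finset.univ : Finset (Fin K)) = insert i (Finset.univ.erase i) :=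
      (Finset.insert_erase (Finset.mem_univ i)).symm
    have hre : (⋂ j ∈ Finset.univ, (M.S j) ⁻¹' (F j)) = (M.S i) ⁻¹' {s} ∩
        ⋂ j ∈ Finset.univ.erase i, (M.S j) ⁻¹' ((win L s)ᶜ : Finset (ZMod n)) := by
      conv_lhs => rw [huniv]
      rw [Finset.set_biInter_insert]
      congr 1
      · simp [hF]
      · refine Set.iInter_congr fun j => Set.iInter_congr fun hj => ?_
        rw [hF]
        simp [Finset.ne_of_mem_erase hj]
    rw [← hre, M.meas_iInter_S Finset.univ F]
    rw [← Finset.mul_prod_erase Finset.univ _ (Finset.mem_univ i)]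
    have h1 : M.μ ((M.S i) ⁻¹' (F i)) = (n : ENNReal)⁻¹ := by
      have hu := M.unifS i s
      have he : (M.S i) ⁻¹' (F i) = {ω | M.S i ω = s} := by
        rw [hF]; simp only [if_pos rfl]; rfl
      rw [he, hu]
    have h2 : ∀ j ∈ Finset.univ.erase i,
        M.μ ((M.S j) ⁻¹' (F j)) = ((n - L : ℕ) : ENNReal) * (n : ENNReal)⁻¹ := by
      intro j hj
      have hFj : F j = (((win L s)ᶜ : Finset (ZMod n)) : Set (ZMod n)) := by
        rw [hF]; simp [Finset.ne_of_mem_erase hj]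
      rw [hFj, M.meas_S_mem j]
      congr 2
      rw [Finset.card_compl, win_card hLn, ZMod.card]
    rw [h1, Finset.prod_congr rfl h2, Finset.prod_const, Finset.card_erase_of_mem
      (Finset.mem_univ i), Finset.card_univ, Fintype.card_fin]
  rw [tsum_congr hterm, tsum_fintype, Finset.sum_const, Finset.card_univ, ZMod.card, nsmul_eq_mul, ← mul_assoc,
    ENNReal.mul_inv_cancel (by exact_mod_cast (NeZero.ne n)) (by simp), one_mul]

lemma SSE.meas_isl_inter_le (h2L : 2 * L ≤ n) {i j : Fin K} (hij : i ≠ j) :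
    M.μ (M.isl i ∩ M.isl j) ≤ (((n - 2 * L : ℕ) : ENNReal) * (n : ENNReal)⁻¹) ^ (K - 2) := by
  classical
  have hLn : L ≤ n := by omega
  set G : ZMod n → ZMod n → Fin K → Set (ZMod n) := fun s t k =>
    if k = i then {s} else if k = j then {t}
    else (((win L s ∪ win L t)ᶜ : Finset (ZMod n)) : Set (ZMod n)) with hG
  set D : ZMod n → ZMod n → Set M.Ω := fun s t =>
    if t ∉ win L s ∧ s ∉ win L t then ⋂ k ∈ Finset.univ, (M.S k) ⁻¹' (G s t k)
    else ∅ with hD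
  have hsub : M.isl i ∩ M.isl j ⊆ ⋃ s, ⋃ t, D s t := by
    rintro ω ⟨hi, hj⟩
    refine Set.mem_iUnion.2 ⟨M.S i ω, Set.mem_iUnion.2 ⟨M.S j ω, ?_⟩⟩
    have hv1 : M.S j ω ∉ win L (M.S i ω) := by
      rw [mem_win_iff]; rintro ⟨l, hl⟩; exact hi j (Ne.symm hij) l hl
    have hv2 : M.S i ω ∉ win L (M.S j ω) := by
      rw [mem_win_iff]; rintro ⟨l, hl⟩; exact hj i hij l hl
    rw [hD]
    simp only [hv1, hv2, not_false_iff, and_self, if_true]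
    refine Set.mem_iInter.2 fun k => Set.mem_iInter.2 fun _ => ?_
    rw [Set.mem_preimage, hG]
    by_cases hki : k = i
    · subst hki; simp
    · by_cases hkj : k = j
      · subst hkj; simp [hki]
      · simp only [hki, hkj, if_false]
        rw [Finset.coe_compl, Set.mem_compl_iff, Finset.mem_coe, Finset.mem_union]
        rintro (hw | hw)
        · rw [mem_win_iff] at hw
          obtain ⟨l, hl⟩ := hw
          exact hi k hki l hl
        · rw [mem_win_iff] at hw
          obtain ⟨l, hl⟩ := hw
          exact hj k hkj l hl
  have hDle : ∀ s t : ZMod n, M.μ (D s t) ≤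
      (n : ENNReal)⁻¹ * ((n : ENNReal)⁻¹ *
        (((n - 2 * L : ℕ) : ENNReal) * (n : ENNReal)⁻¹) ^ (K - 2)) := by
    intro s t
    simp only [hD]
    by_cases hv : t ∉ win L s ∧ s ∉ win L t
    · rw [if_pos hv, M.meas_iInter_S Finset.univ (G s t)]
      have hji : j ∈ Finset.univ.erase i := by
        simp [Finset.mem_erase, Ne.symm hij]
      rw [← Finset.mul_prod_erase Finset.univ _ (Finset.mem_univ i),
        ← Finset.mul_prod_erase _ _ hji]
      have h1 : M.μ ((M.S i) ⁻¹' (G s t i)) = (n : ENNReal)⁻¹ := by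
        have hu := M.unifS i s
        have he : (M.S i) ⁻¹' (G s t i) = {ω | M.S i ω = s} := by
          rw [hG]; simp only [if_pos rfl]; rfl
        rw [he, hu]
      have h2 : M.μ ((M.S j) ⁻¹' (G s t j)) = (n : ENNReal)⁻¹ := by
        have hu := M.unifS j t
        have he : (M.S j) ⁻¹' (G s t j) = {ω | M.S j ω = t} := by
          rw [hG]; simp only [if_neg (Ne.symm hij), if_pos rfl]; rfl
        rw [he, hu]
      have h3 : ∀ k ∈ (Finset.univ.erase i).erase j,
          M.μ ((M.S k) ⁻¹' (G s t k)) = ((n - 2 * L : ℕ) : ENNReal) * (n : ENNReal)⁻¹ := by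
        intro k hk
        have hkj : k ≠ j := (Finset.mem_erase.1 hk).1
        have hki : k ≠ i := (Finset.mem_erase.1 (Finset.mem_erase.1 hk).2).1
        have hGk : G s t k = (((win L s ∪ win L t)ᶜ : Finset (ZMod n)) : Set (ZMod n)) := by
          rw [hG]; simp [hki, hkj]
        rw [hGk, M.meas_S_mem k]
        congr 2
        rw [Finset.card_compl, Finset.card_union_of_disjoint (win_disjoint hv.1 hv.2),
          win_card hLn, win_card hLn, ZMod.card]
        omega
      rw [h1, h2, Finset.prod_congr rfl h3, Finset.prod_const,
        Finset.card_erase_of_mem hji, Finset.card_erase_of_mem (Finset.mem_univ i),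
        Finset.card_univ, Fintype.card_fin]
      have hc : K - 1 - 1 = K - 2 := by omega
      rw [hc]
    · rw [if_neg hv]
      simp
  have hn1 : (n : ENNReal) * (n : ENNReal)⁻¹ = 1 :=
    ENNReal.mul_inv_cancel (by exact_mod_cast (NeZero.ne n)) (by simp)
  calc M.μ (M.isl i ∩ M.isl j) ≤ M.μ (⋃ s, ⋃ t, D s t) := measure_mono hsub
    _ ≤ ∑' s : ZMod n, M.μ (⋃ t, D s t) := measure_iUnion_le _
    _ ≤ ∑' s : ZMod n, ∑' t : ZMod n, M.μ (D s t) :=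
        ENNReal.tsum_le_tsum (fun s => measure_iUnion_le _)
    _ ≤ ∑' _ : ZMod n, ∑' _ : ZMod n, (n : ENNReal)⁻¹ * ((n : ENNReal)⁻¹ *
          (((n - 2 * L : ℕ) : ENNReal) * (n : ENNReal)⁻¹) ^ (K - 2)) :=
        ENNReal.tsum_le_tsum (fun s => ENNReal.tsum_le_tsum (fun t => hDle s t))
    _ = (((n - 2 * L : ℕ) : ENNReal) * (n : ENNReal)⁻¹) ^ (K - 2) := by
        rw [tsum_fintype, Finset.sum_const, Finset.card_univ, ZMod.card, nsmul_eq_mul,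
          tsum_fintype, Finset.sum_const, Finset.card_univ, ZMod.card, nsmul_eq_mul]
        calc (n : ENNReal) * ((n : ENNReal) * ((n : ENNReal)⁻¹ * ((n : ENNReal)⁻¹ *
              (((n - 2 * L : ℕ) : ENNReal) * (n : ENNReal)⁻¹) ^ (K - 2)))) =
            ((n : ENNReal) * (n : ENNReal)⁻¹) * (((n : ENNReal) * (n : ENNReal)⁻¹)) *
              (((n - 2 * L : ℕ) : ENNReal) * (n : ENNReal)⁻¹) ^ (K - 2) := by ring
          _ = _ := by rw [hn1, one_mul, one_mul]

lemma SSE.count_eq_sum (ω : M.Ω) :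
    (M.trueIslandCount ω : ℝ) = ∑ i : Fin K, (M.isl i).indicator (fun _ => (1 : ℝ)) ω := by
  classical
  rw [SSE.trueIslandCount, Finset.card_filter]
  push_cast
  refine Finset.sum_congr rfl fun i _ => ?_
  by_cases h : ∀ j : Fin K, j ≠ i → ∀ l : Fin L, M.S j ω ≠ M.S i ω + ((l : ℕ) : ZMod n)
  · rw [if_pos h, Set.indicator_of_mem (show ω ∈ M.isl i from h)]
  · rw [if_neg h, Set.indicator_of_notMem (show ω ∉ M.isl i from h)]

lemma SSE.memLp_count :
    MeasureTheory.MemLp (fun ω => (M.trueIslandCount ω : ℝ)) 2 M.μ := by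
  have h : MeasureTheory.MemLp
      (fun ω => ∑ i : Fin K, (M.isl i).indicator (fun _ => (1 : ℝ)) ω) 2 M.μ :=
    memLp_finset_sum _ (fun i _ => memLp_indicator_const 2 (M.isl_measurable i) 1
      (Or.inr (measure_ne_top _ _)))
  have he : (fun ω => (M.trueIslandCount ω : ℝ)) =
      fun ω => ∑ i : Fin K, (M.isl i).indicator (fun _ => (1 : ℝ)) ω :=
    funext fun ω => M.count_eq_sum ω
  rw [he]
  exact h

lemma SSE.integral_count (hLn : L ≤ n) :
    ∫ ω, (M.trueIslandCount ω : ℝ) ∂M.μ =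
      (K : ℝ) * (((n - L : ℕ) : ℝ) / n) ^ (K - 1) := by
  have he : (fun ω => (M.trueIslandCount ω : ℝ)) =
      fun ω => ∑ i : Fin K, (M.isl i).indicator (fun _ => (1 : ℝ)) ω :=
    funext fun ω => M.count_eq_sum ω
  rw [he, integral_finset_sum _ (fun i _ =>
    (memLp_indicator_const 1 (M.isl_measurable i) (1 : ℝ)
      (Or.inr (measure_ne_top _ _))).integrable le_rfl)]
  have h1 : ∀ i : Fin K, ∫ ω, (M.isl i).indicator (fun _ => (1 : ℝ)) ω ∂M.μ =
      (((n - L : ℕ) : ℝ) / n) ^ (K - 1) := by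
    intro i
    rw [integral_indicator_const (1 : ℝ) (M.isl_measurable i), measureReal_def, M.meas_isl hLn i,
      smul_eq_mul, mul_one]
    rw [ENNReal.toReal_pow, ENNReal.toReal_mul, ENNReal.toReal_inv, ENNReal.toReal_natCast,
      ENNReal.toReal_natCast, div_eq_mul_inv]
  rw [Finset.sum_congr rfl (fun i _ => h1 i), Finset.sum_const, Finset.card_univ,
    Fintype.card_fin, nsmul_eq_mul]

lemma SSE.integral_count_sq_le (h2L : 2 * L ≤ n) (hK2 : 2 ≤ K) :
    ∫ ω, ((fun ω => (M.trueIslandCount ω : ℝ)) ^ 2) ω ∂M.μ ≤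
      (K : ℝ) * (((n - L : ℕ) : ℝ) / n) ^ (K - 1) +
        (K : ℝ) ^ 2 * (((n - 2 * L : ℕ) : ℝ) / n) ^ (K - 2) := by
  classical
  have hLn : L ≤ n := by omega
  have hint : ∀ (s : Set M.Ω), MeasurableSet s → MeasureTheory.Integrable
      (s.indicator (fun _ => (1 : ℝ))) M.μ := fun s hs =>
    (memLp_indicator_const 1 hs (1 : ℝ) (Or.inr (measure_ne_top _ _))).integrable le_rfl
  have he : ∀ ω, ((fun ω => (M.trueIslandCount ω : ℝ)) ^ 2) ω =
      ∑ i : Fin K, ∑ j : Fin K, (M.isl i ∩ M.isl j).indicator (fun _ => (1 : ℝ)) ω := by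
    intro ω
    rw [Pi.pow_apply, M.count_eq_sum ω, sq, Finset.sum_mul_sum]
    refine Finset.sum_congr rfl fun i _ => Finset.sum_congr rfl fun j _ => ?_
    by_cases hi : ω ∈ M.isl i <;> by_cases hj : ω ∈ M.isl j <;>
      simp [Set.indicator_apply, hi, hj, Set.mem_inter_iff]
  rw [integral_congr_ae (Filter.Eventually.of_forall he)]
  rw [integral_finset_sum _ (fun i _ => MeasureTheory.integrable_finset_sum _ (fun j _ =>
    hint _ ((M.isl_measurable i).inter (M.isl_measurable j))))]
  have hsum : ∀ i : Fin K,
      ∫ ω, ∑ j : Fin K, (M.isl i ∩ M.isl j).indicator (fun _ => (1 : ℝ)) ω ∂M.μ =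
      ∑ j : Fin K, (M.μ (M.isl i ∩ M.isl j)).toReal := by
    intro i
    rw [integral_finset_sum _ (fun j _ => hint _ ((M.isl_measurable i).inter
      (M.isl_measurable j)))]
    refine Finset.sum_congr rfl fun j _ => ?_
    rw [integral_indicator_const (1 : ℝ) ((M.isl_measurable i).inter (M.isl_measurable j)),
      smul_eq_mul, mul_one, measureReal_def]
  rw [Finset.sum_congr rfl (fun i _ => hsum i)]
  have hbound : ∀ i : Fin K, ∑ j : Fin K, (M.μ (M.isl i ∩ M.isl j)).toReal ≤
      (((n - L : ℕ) : ℝ) / n) ^ (K - 1) +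
        (K : ℝ) * (((n - 2 * L : ℕ) : ℝ) / n) ^ (K - 2) := by
    intro i
    rw [← Finset.add_sum_erase Finset.univ _ (Finset.mem_univ i)]
    have hdiag : (M.μ (M.isl i ∩ M.isl i)).toReal = (((n - L : ℕ) : ℝ) / n) ^ (K - 1) := by
      rw [Set.inter_self, M.meas_isl hLn i, ENNReal.toReal_pow, ENNReal.toReal_mul,
        ENNReal.toReal_inv, ENNReal.toReal_natCast, ENNReal.toReal_natCast, div_eq_mul_inv]
    have hoff : ∀ j ∈ Finset.univ.erase i, (M.μ (M.isl i ∩ M.isl j)).toReal ≤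
        (((n - 2 * L : ℕ) : ℝ) / n) ^ (K - 2) := by
      intro j hj
      have hij : i ≠ j := (Finset.ne_of_mem_erase hj).symm
      have hle := M.meas_isl_inter_le h2L hij
      have hfin : ((((n - 2 * L : ℕ) : ENNReal) * (n : ENNReal)⁻¹) ^ (K - 2)) ≠ ⊤ := by
        apply ENNReal.pow_ne_top
        exact ENNReal.mul_ne_top (ENNReal.natCast_ne_top _)
          (ENNReal.inv_ne_top.2 (by exact_mod_cast NeZero.ne n))
      have := ENNReal.toReal_mono hfin hle
      rwa [ENNReal.toReal_pow, ENNReal.toReal_mul, ENNReal.toReal_inv,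
        ENNReal.toReal_natCast, ENNReal.toReal_natCast, ← div_eq_mul_inv] at this
    have hcard : (Finset.univ.erase i).card = K - 1 := by
      rw [Finset.card_erase_of_mem (Finset.mem_univ i), Finset.card_univ, Fintype.card_fin]
    calc (M.μ (M.isl i ∩ M.isl i)).toReal +
          ∑ j ∈ Finset.univ.erase i, (M.μ (M.isl i ∩ M.isl j)).toReal ≤
        (((n - L : ℕ) : ℝ) / n) ^ (K - 1) +
          ∑ _j ∈ Finset.univ.erase i, (((n - 2 * L : ℕ) : ℝ) / n) ^ (K - 2) := by
          exact add_le_add (le_of_eq hdiag) (Finset.sum_le_sum hoff)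
      _ ≤ _ := by
          rw [Finset.sum_const, hcard, nsmul_eq_mul]
          have h1 : ((K - 1 : ℕ) : ℝ) ≤ (K : ℝ) := by
            exact_mod_cast Nat.sub_le K 1
          have h2 : (0 : ℝ) ≤ (((n - 2 * L : ℕ) : ℝ) / n) ^ (K - 2) := by positivity
          nlinarith
  calc ∑ i : Fin K, ∑ j : Fin K, (M.μ (M.isl i ∩ M.isl j)).toReal ≤
      ∑ _i : Fin K, ((((n - L : ℕ) : ℝ) / n) ^ (K - 1) +
        (K : ℝ) * (((n - 2 * L : ℕ) : ℝ) / n) ^ (K - 2)) := Finset.sum_le_sum fun i _ => hbound i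
    _ = _ := by
        rw [Finset.sum_const, Finset.card_univ, Fintype.card_fin, nsmul_eq_mul]
        ring

lemma SSE.cheb_bound (hL1 : 1 ≤ L) (h2L : 2 * L ≤ n) (hK2 : 2 ≤ K) {a : ℝ} (ha : 0 < a) :
    (M.μ {ω | a ≤ |(M.trueIslandCount ω : ℝ) -
        (K : ℝ) * (((n - L : ℕ) : ℝ) / n) ^ (K - 1)|}).toReal ≤
      ((K : ℝ) * (((n - L : ℕ) : ℝ) / n) ^ (K - 1) +
        (K : ℝ) ^ 2 * ((((n - L : ℕ) : ℝ) / n) ^ (K - 1)) ^ 2 *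
          (((n : ℝ) / ((n : ℝ) - L)) ^ 2 - 1)) / a ^ 2 := by
  have hLn : L ≤ n := by omega
  have hn0' : 0 < n := by omega
  have hn0 : (0 : ℝ) < n := by exact_mod_cast hn0' 
  set p : ℝ := (((n - L : ℕ) : ℝ) / n) ^ (K - 1) with hp
  set B : ℝ := (K : ℝ) * p + (K : ℝ) ^ 2 * p ^ 2 * (((n : ℝ) / ((n : ℝ) - L)) ^ 2 - 1) with hB
  have hcast : ((n - L : ℕ) : ℝ) = (n : ℝ) - L := by
    rw [Nat.cast_sub hLn]
  have hcast2 : ((n - 2 * L : ℕ) : ℝ) = (n : ℝ) - 2 * L := by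
    rw [Nat.cast_sub h2L]; push_cast; ring
  have hnL : (0 : ℝ) < (n : ℝ) - L := by
    have : (L : ℝ) ≥ 1 := by exact_mod_cast hL1
    have h2L' : 2 * (L : ℝ) ≤ n := by exact_mod_cast h2L
    linarith
  have hr1 : (0 : ℝ) < ((n - L : ℕ) : ℝ) / n := by rw [hcast]; positivity
  have hp0 : 0 < p := pow_pos hr1 _
  have hvar : ProbabilityTheory.variance (fun ω => (M.trueIslandCount ω : ℝ)) M.μ ≤ B := by
    rw [ProbabilityTheory.variance_eq_sub M.memLp_count, M.integral_count hLn]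
    have h2 := M.integral_count_sq_le h2L hK2
    have key : (((n - 2 * L : ℕ) : ℝ) / n) ^ (K - 2) ≤
        p ^ 2 * ((n : ℝ) / ((n : ℝ) - L)) ^ 2 := by
      have hr2nn : (0 : ℝ) ≤ ((n - 2 * L : ℕ) : ℝ) / n := by positivity
      have hle : ((n - 2 * L : ℕ) : ℝ) / n ≤ (((n - L : ℕ) : ℝ) / n) ^ 2 := by
        rw [hcast, hcast2, div_pow, div_le_div_iff₀ hn0 (by positivity)]
        nlinarith [mul_nonneg (sq_nonneg (L : ℝ)) hn0.le]
      have h3 : (((n - 2 * L : ℕ) : ℝ) / n) ^ (K - 2) ≤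
          ((((n - L : ℕ) : ℝ) / n) ^ 2) ^ (K - 2) := pow_le_pow_left₀ hr2nn hle _
      have h4 : ((((n - L : ℕ) : ℝ) / n) ^ 2) ^ (K - 2) * (((n - L : ℕ) : ℝ) / n) ^ 2 =
          p ^ 2 := by
        rw [hp, ← pow_mul, ← pow_mul, ← pow_add]
        congr 1
        omega
      have h5 : ((n : ℝ) / ((n : ℝ) - L)) ^ 2 * ((((n - L : ℕ) : ℝ) / n) ^ 2) = 1 := by
        rw [hcast, div_pow, div_pow, div_mul_div_comm]
        rw [div_eq_one_iff_eq (by positivity)]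
        ring
      calc (((n - 2 * L : ℕ) : ℝ) / n) ^ (K - 2) ≤ ((((n - L : ℕ) : ℝ) / n) ^ 2) ^ (K - 2) := h3
        _ = ((((n - L : ℕ) : ℝ) / n) ^ 2) ^ (K - 2) *
              (((n : ℝ) / ((n : ℝ) - L)) ^ 2 * ((((n - L : ℕ) : ℝ) / n) ^ 2)) := by
            rw [h5, mul_one]
        _ = p ^ 2 * ((n : ℝ) / ((n : ℝ) - L)) ^ 2 := by rw [← h4]; ring
    rw [hB]
    nlinarith [sq_nonneg (K : ℝ), h2, key]
  have hBnn : 0 ≤ B := by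
    have h1 : (1 : ℝ) ≤ (n : ℝ) / ((n : ℝ) - L) := by
      rw [le_div_iff₀ hnL]
      have : (0 : ℝ) ≤ L := by positivity
      linarith
    have : (0 : ℝ) ≤ ((n : ℝ) / ((n : ℝ) - L)) ^ 2 - 1 := by nlinarith
    have hK0 : (0 : ℝ) ≤ (K : ℝ) := by positivity
    rw [hB]; positivity
  have hcheb := ProbabilityTheory.meas_ge_le_variance_div_sq (X := fun ω =>
    (M.trueIslandCount ω : ℝ)) M.memLp_count ha
  rw [M.integral_count hLn] at hcheb
  have hvmono : ProbabilityTheory.variance (fun ω => (M.trueIslandCount ω : ℝ)) M.μ / a ^ 2 ≤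
      B / a ^ 2 := by
    apply div_le_div_of_nonneg_right hvar (by positivity)
  refine le_trans (ENNReal.toReal_le_of_le_ofReal (by positivity)
    (le_trans hcheb (ENNReal.ofReal_le_ofReal hvmono))) le_rfl

end Core


section Asymp

lemma Lof_one_le {Lbar : ℝ} (hLbar : 0 < Lbar) {n : ℕ} (hn : 2 ≤ n) : 1 ≤ Lof Lbar n := by
  rw [Lof]
  refine Nat.ceil_pos.2 (mul_pos hLbar (Real.logb_pos one_lt_two ?_))
  exact_mod_cast hn

lemma tendsto_Lof_div {Lbar : ℝ} (hLbar : 0 < Lbar) :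
    Tendsto (fun n : ℕ => (Lof Lbar n : ℝ) / n) atTop (nhds 0) := by
  have hlog : Tendsto (fun n : ℕ => Real.log n / n) atTop (nhds 0) := by
    have h := Real.isLittleO_log_id_atTop.tendsto_div_nhds_zero
    exact (h.comp tendsto_natCast_atTop_atTop)
  have hupper : Tendsto (fun n : ℕ => Lbar / Real.log 2 * (Real.log n / n) + 1 / n)
      atTop (nhds 0) := by
    have h1 := hlog.const_mul (Lbar / Real.log 2)
    have h2 := tendsto_one_div_atTop_nhds_zero_nat (𝕜 := ℝ)
    simpa using h1.add h2
  refine tendsto_of_tendsto_of_tendsto_of_le_of_le' tendsto_const_nhds hupper ?_ ?_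
  · filter_upwards [eventually_ge_atTop 1] with n hn
    positivity
  · filter_upwards [eventually_ge_atTop 2] with n hn
    have hn0 : (0 : ℝ) < n := by exact_mod_cast (by omega : 0 < n)
    have hlogb : 0 ≤ Lbar * Real.logb 2 n :=
      mul_nonneg hLbar.le (Real.logb_nonneg one_lt_two (by exact_mod_cast (by omega : 1 ≤ n)))
    have hceil : (Lof Lbar n : ℝ) < Lbar * Real.logb 2 n + 1 := Nat.ceil_lt_add_one hlogb
    have h1 : (Lof Lbar n : ℝ) / n ≤ (Lbar * Real.logb 2 n + 1) / n :=
      (div_le_div_iff_of_pos_right hn0).2 hceil.le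
    refine le_trans h1 (le_of_eq ?_)
    rw [Real.logb]
    have h2 : Real.log 2 ≠ 0 := (Real.log_pos one_lt_two).ne'
    field_simp

lemma tendsto_KL {c Lbar : ℝ} (hc : 0 < c) (hLbar : 0 < Lbar) :
    Tendsto (fun n : ℕ => (Kof c Lbar n : ℝ) * ((Lof Lbar n : ℝ) / n)) atTop (nhds c) := by
  have hupper : Tendsto (fun n : ℕ => c + (Lof Lbar n : ℝ) / n) atTop (nhds c) := by
    simpa using tendsto_const_nhds.add (tendsto_Lof_div hLbar)
  refine tendsto_of_tendsto_of_tendsto_of_le_of_le' tendsto_const_nhds hupper ?_ ?_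
  · filter_upwards [eventually_ge_atTop 2] with n hn
    have hL1 := Lof_one_le hLbar hn
    have hn0 : (0 : ℝ) < n := by exact_mod_cast (by omega : 0 < n)
    have hL0 : (0 : ℝ) < Lof Lbar n := by exact_mod_cast hL1
    have hle : c * n / Lof Lbar n ≤ (Kof c Lbar n : ℝ) := Nat.le_ceil _
    calc c = (c * n / Lof Lbar n) * ((Lof Lbar n : ℝ) / n) := by field_simp
      _ ≤ (Kof c Lbar n : ℝ) * ((Lof Lbar n : ℝ) / n) := by
          exact mul_le_mul_of_nonneg_right hle (by positivity)
  · filter_upwards [eventually_ge_atTop 2] with n hn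
    have hL1 := Lof_one_le hLbar hn
    have hn0 : (0 : ℝ) < n := by exact_mod_cast (by omega : 0 < n)
    have hL0 : (0 : ℝ) < Lof Lbar n := by exact_mod_cast hL1
    have harg : 0 ≤ c * n / Lof Lbar n := by positivity
    have hlt : (Kof c Lbar n : ℝ) < c * n / Lof Lbar n + 1 := Nat.ceil_lt_add_one harg
    calc (Kof c Lbar n : ℝ) * ((Lof Lbar n : ℝ) / n) ≤
        (c * n / Lof Lbar n + 1) * ((Lof Lbar n : ℝ) / n) := by
          exact mul_le_mul_of_nonneg_right hlt.le (by positivity)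
      _ = c + (Lof Lbar n : ℝ) / n := by field_simp

lemma tendsto_Kof_atTop {c Lbar : ℝ} (hc : 0 < c) (hLbar : 0 < Lbar) :
    Tendsto (fun n : ℕ => (Kof c Lbar n : ℝ)) atTop atTop := by
  have hx : Tendsto (fun n : ℕ => (Lof Lbar n : ℝ) / n) atTop (nhdsWithin 0 (Set.Ioi 0)) := by
    refine tendsto_nhdsWithin_of_tendsto_nhds_of_eventually_within _ (tendsto_Lof_div hLbar) ?_
    filter_upwards [eventually_ge_atTop 2] with n hn
    have hL1 := Lof_one_le hLbar hn
    have hn0 : (0 : ℝ) < n := by exact_mod_cast (by omega : 0 < n)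
    have hL0 : (0 : ℝ) < Lof Lbar n := by exact_mod_cast hL1
    exact Set.mem_Ioi.2 (by positivity)
  have hinv := hx.inv_tendsto_nhdsGT_zero
  have hmul := hinv.const_mul_atTop hc
  refine tendsto_atTop_mono' _ ?_ hmul
  filter_upwards [eventually_ge_atTop 2] with n hn
  have hL1 := Lof_one_le hLbar hn
  have hn0 : (0 : ℝ) < n := by exact_mod_cast (by omega : 0 < n)
  have hL0 : (0 : ℝ) < Lof Lbar n := by exact_mod_cast hL1
  have h1 : c * (((fun n : ℕ => (Lof Lbar n : ℝ) / n) n))⁻¹ = c * n / Lof Lbar n := by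
    simp only [inv_div]
    ring
  rw [Pi.inv_apply, h1]
  exact Nat.le_ceil _

lemma tendsto_pform {c Lbar : ℝ} (hc : 0 < c) (hLbar : 0 < Lbar) :
    Tendsto (fun n : ℕ => (((n - Lof Lbar n : ℕ) : ℝ) / n) ^ (Kof c Lbar n - 1))
      atTop (nhds (Real.exp (-c))) := by
  have hx0 := tendsto_Lof_div hLbar
  have hKL := tendsto_KL hc hLbar
  have hKtop := tendsto_Kof_atTop hc hLbar
  have hKev : ∀ᶠ n : ℕ in atTop, 1 ≤ Kof c Lbar n := by
    filter_upwards [hKtop.eventually_ge_atTop 1] with n hn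
    exact_mod_cast hn
  have hm : Tendsto (fun n : ℕ => ((Kof c Lbar n - 1 : ℕ) : ℝ) * ((Lof Lbar n : ℝ) / n))
      atTop (nhds c) := by
    have hev : (fun n : ℕ => ((Kof c Lbar n - 1 : ℕ) : ℝ) * ((Lof Lbar n : ℝ) / n)) =ᶠ[atTop]
        fun n : ℕ => (Kof c Lbar n : ℝ) * ((Lof Lbar n : ℝ) / n) - (Lof Lbar n : ℝ) / n := by
      filter_upwards [hKev] with n hn
      rw [Nat.cast_sub hn]
      ring
    rw [Filter.tendsto_congr' hev]
    simpa using hKL.sub hx0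
  have h1x : Tendsto (fun n : ℕ => (1 - (Lof Lbar n : ℝ) / n)⁻¹) atTop (nhds 1) := by
    have h := (tendsto_const_nhds.sub hx0 :
      Tendsto (fun n : ℕ => (1 : ℝ) - (Lof Lbar n : ℝ) / n) atTop (nhds (1 - 0)))
    have h2 := h.inv₀ (by norm_num)
    simpa using h2
  have hm2 : Tendsto (fun n : ℕ => ((Kof c Lbar n - 1 : ℕ) : ℝ) *
      (((Lof Lbar n : ℝ) / n) / (1 - (Lof Lbar n : ℝ) / n))) atTop (nhds c) := by
    have h := hm.mul h1x
    rw [mul_one] at h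
    refine Tendsto.congr (fun n => ?_) h
    rw [div_eq_mul_inv]
    ring
  have hupper : Tendsto (fun n : ℕ =>
      Real.exp (-(((Kof c Lbar n - 1 : ℕ) : ℝ) * ((Lof Lbar n : ℝ) / n))))
      atTop (nhds (Real.exp (-c))) :=
    (Real.continuous_exp.tendsto _).comp hm.neg
  have hlower : Tendsto (fun n : ℕ =>
      Real.exp (-(((Kof c Lbar n - 1 : ℕ) : ℝ) *
        (((Lof Lbar n : ℝ) / n) / (1 - (Lof Lbar n : ℝ) / n)))))
      atTop (nhds (Real.exp (-c))) :=
    (Real.continuous_exp.tendsto _).comp hm2.neg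
  have hsmall : ∀ᶠ n : ℕ in atTop, (Lof Lbar n : ℝ) / n < 1 / 2 := by
    have := hx0.eventually_lt_const (show (0:ℝ) < 1/2 by norm_num)
    exact this
  refine tendsto_of_tendsto_of_tendsto_of_le_of_le' hlower hupper ?_ ?_
  · filter_upwards [eventually_ge_atTop 2, hsmall, hKev] with n hn2 hs hK1
    have hL1 := Lof_one_le hLbar hn2
    have hn0 : (0 : ℝ) < n := by exact_mod_cast (by omega : 0 < n)
    have hLn : Lof Lbar n ≤ n := by
      by_contra h
      push_neg at h
      have : (1 : ℝ) < (Lof Lbar n : ℝ) / n := by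
        rw [lt_div_iff₀ hn0]
        exact_mod_cast (by omega : 1 * n < Lof Lbar n)
      linarith
    set x : ℝ := (Lof Lbar n : ℝ) / n with hxdef
    have hx0' : 0 < x := by
      have : (0:ℝ) < Lof Lbar n := by exact_mod_cast hL1
      positivity
    have hx1 : x < 1 := lt_trans hs (by norm_num)
    have hcast : ((n - Lof Lbar n : ℕ) : ℝ) / n = 1 - x := by
      rw [Nat.cast_sub hLn, hxdef, sub_div, div_self hn0.ne']
    rw [hcast]
    set m := Kof c Lbar n - 1
    have hkey : Real.exp (-(x / (1 - x))) ≤ 1 - x := by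
      have h1 := Real.add_one_le_exp (x / (1 - x))
      have h1x0 : (0:ℝ) < 1 - x := by linarith
      have heq : x / (1 - x) + 1 = (1 - x)⁻¹ := by rw [div_add_one h1x0.ne']; ring
      rw [heq] at h1
      have h2 : (0:ℝ) < (1 - x)⁻¹ := by positivity
      calc Real.exp (-(x / (1 - x))) = (Real.exp (x / (1 - x)))⁻¹ := by
            rw [Real.exp_neg]
        _ ≤ ((1 - x)⁻¹)⁻¹ := by
            exact inv_anti₀ h2 h1
        _ = 1 - x := by rw [inv_inv]
    calc Real.exp (-((m : ℝ) * (x / (1 - x)))) =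
        Real.exp (-(x / (1 - x))) ^ m := by
          rw [← Real.exp_nat_mul]
          ring_nf
      _ ≤ (1 - x) ^ m := pow_le_pow_left₀ (Real.exp_nonneg _) hkey m
  · filter_upwards [eventually_ge_atTop 2, hsmall, hKev] with n hn2 hs hK1
    have hL1 := Lof_one_le hLbar hn2
    have hn0 : (0 : ℝ) < n := by exact_mod_cast (by omega : 0 < n)
    have hLn : Lof Lbar n ≤ n := by
      by_contra h
      push_neg at h
      have : (1 : ℝ) < (Lof Lbar n : ℝ) / n := by
        rw [lt_div_iff₀ hn0]
        exact_mod_cast (by omega : 1 * n < Lof Lbar n)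
      linarith
    set x : ℝ := (Lof Lbar n : ℝ) / n with hxdef
    have hx1 : x < 1 := lt_trans hs (by norm_num)
    have hcast : ((n - Lof Lbar n : ℕ) : ℝ) / n = 1 - x := by
      rw [Nat.cast_sub hLn, hxdef, sub_div, div_self hn0.ne']
    rw [hcast]
    set m := Kof c Lbar n - 1
    have hkey : 1 - x ≤ Real.exp (-x) := by
      have := Real.add_one_le_exp (-x)
      linarith
    calc (1 - x) ^ m ≤ Real.exp (-x) ^ m :=
        pow_le_pow_left₀ (by linarith) hkey m
      _ = Real.exp (-((m : ℝ) * x)) := by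
          rw [← Real.exp_nat_mul]
          ring_nf

end Asymp

/-- Concentration of the number of true islands (Lemma 1). -/
theorem trueIslands_concentration
    (c Lbar δ : ℝ) (hc : 0 < c) (hLbar : 0 < Lbar) (hδ0 : 0 ≤ δ) (hδ1 : δ < 1)
    (model : ∀ n : ℕ, 2 ≤ n → SSE n (Kof c Lbar n) (Lof Lbar n) δ)
    (ε : ℝ) (hε : 0 < ε) :
    Tendsto (fun n : ℕ =>
        if h : 2 ≤ n then
          ((model n h).μ {ω |
            ε * ((Kof c Lbar n : ℝ) * Real.exp (-c)) ≤
              |((model n h).trueIslandCount ω : ℝ) -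
                (Kof c Lbar n : ℝ) * Real.exp (-c)|}).toReal
        else 0) atTop (nhds 0) := by
  classical
  set p : ℕ → ℝ := fun n => (((n - Lof Lbar n : ℕ) : ℝ) / n) ^ (Kof c Lbar n - 1) with hpdef
  set kk : ℕ → ℝ := fun n => (Kof c Lbar n : ℝ) with hkdef
  set q1 : ℕ → ℝ := fun n => (n : ℝ) / ((n : ℝ) - (Lof Lbar n : ℝ)) with hq1def
  set Bb : ℕ → ℝ := fun n =>
    (kk n * p n + kk n ^ 2 * (p n) ^ 2 * (q1 n ^ 2 - 1)) /
      (ε / 2 * kk n * Real.exp (-c)) ^ 2 with hBbdef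
  have hp := tendsto_pform hc hLbar
  have hKtop := tendsto_Kof_atTop hc hLbar
  have hx0 := tendsto_Lof_div hLbar
  have h1x : Tendsto (fun n : ℕ => (1 - (Lof Lbar n : ℝ) / n)⁻¹) atTop (nhds 1) := by
    have h := (tendsto_const_nhds.sub hx0 :
      Tendsto (fun n : ℕ => (1 : ℝ) - (Lof Lbar n : ℝ) / n) atTop (nhds (1 - 0)))
    have h2 := h.inv₀ (by norm_num)
    simpa using h2
  have hq1 : Tendsto q1 atTop (nhds 1) := by
    refine Tendsto.congr' ?_ h1x
    filter_upwards [eventually_ge_atTop 2] with n hn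
    have hn0 : (0 : ℝ) < n := by exact_mod_cast (by omega : 0 < n)
    rw [hq1def]
    simp only
    rw [one_sub_div hn0.ne', inv_div]
  have hev2K : ∀ᶠ n : ℕ in atTop, 2 ≤ Kof c Lbar n := by
    filter_upwards [hKtop.eventually_ge_atTop 2] with n hn
    exact_mod_cast hn
  have hev2L : ∀ᶠ n : ℕ in atTop, 2 * Lof Lbar n ≤ n := by
    filter_upwards [hx0.eventually_lt_const (show (0:ℝ) < 1/2 by norm_num),
      eventually_ge_atTop 2] with n hs hn2
    have hn0 : (0 : ℝ) < n := by exact_mod_cast (by omega : 0 < n)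
    rw [div_lt_iff₀ hn0] at hs
    have : (2 * Lof Lbar n : ℝ) < n := by
      push_cast
      linarith
    exact_mod_cast this.le
  have hclose : ∀ᶠ n : ℕ in atTop, |p n - Real.exp (-c)| ≤ ε / 2 * Real.exp (-c) := by
    have h := Metric.tendsto_nhds.mp hp (ε / 2 * Real.exp (-c)) (by positivity)
    filter_upwards [h] with n hn
    rw [Real.dist_eq] at hn
    exact hn.le
  have hBb0 : Tendsto Bb atTop (nhds 0) := by
    have hE : Tendsto (fun n : ℕ => (p n * (kk n)⁻¹ + (p n) ^ 2 * (q1 n ^ 2 - 1)) *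
        ((ε / 2) ^ 2 * Real.exp (-c) ^ 2)⁻¹) atTop (nhds 0) := by
      have h1 : Tendsto (fun n : ℕ => p n * (kk n)⁻¹) atTop (nhds 0) := by
        have := hp.mul hKtop.inv_tendsto_atTop
        simpa using this
      have h2 : Tendsto (fun n : ℕ => (p n) ^ 2 * (q1 n ^ 2 - 1)) atTop (nhds 0) := by
        have hq2 : Tendsto (fun n : ℕ => q1 n ^ 2 - 1) atTop (nhds 0) := by
          have := (hq1.mul hq1).sub (tendsto_const_nhds (x := (1:ℝ)))
          simpa [sq] using this
        have := (hp.mul hp).mul hq2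
        simpa [sq] using this
      have := (h1.add h2).mul (tendsto_const_nhds (x := ((ε / 2) ^ 2 * Real.exp (-c) ^ 2)⁻¹))
      simpa using this
    refine Tendsto.congr' ?_ hE
    filter_upwards [hKtop.eventually_ge_atTop 1] with n hn
    have hk0 : (0:ℝ) < kk n := lt_of_lt_of_le one_pos hn
    rw [hBbdef]
    simp only
    rw [mul_pow, mul_pow]
    field_simp
  refine tendsto_of_tendsto_of_tendsto_of_le_of_le' tendsto_const_nhds hBb0 ?_ ?_
  · refine Filter.Eventually.of_forall fun n => ?_
    by_cases h : 2 ≤ n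
    · rw [dif_pos h]; exact ENNReal.toReal_nonneg
    · rw [dif_neg h]
  · filter_upwards [eventually_ge_atTop 2, hev2K, hev2L, hclose] with n hn2 hK2 h2L hclo
    rw [dif_pos hn2]
    set M := model n hn2
    haveI : NeZero n := ⟨by omega⟩
    have hL1 : 1 ≤ Lof Lbar n := Lof_one_le hLbar hn2
    have hkpos : (0:ℝ) < kk n := by
      have h0 : 0 < Kof c Lbar n := by omega
      simp only [hkdef]
      exact_mod_cast h0
    have hapos : 0 < ε / 2 * kk n * Real.exp (-c) := by positivity
    have hsub : {ω | ε * ((Kof c Lbar n : ℝ) * Real.exp (-c)) ≤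
        |((M.trueIslandCount ω : ℝ)) - (Kof c Lbar n : ℝ) * Real.exp (-c)|} ⊆
        {ω | ε / 2 * kk n * Real.exp (-c) ≤
          |((M.trueIslandCount ω : ℝ)) - (Kof c Lbar n : ℝ) * p n|} := by
      intro ω hω
      simp only [Set.mem_setOf_eq] at hω ⊢
      have htri : |((M.trueIslandCount ω : ℝ)) - (Kof c Lbar n : ℝ) * Real.exp (-c)| ≤
          |((M.trueIslandCount ω : ℝ)) - (Kof c Lbar n : ℝ) * p n| +
            |(Kof c Lbar n : ℝ) * p n - (Kof c Lbar n : ℝ) * Real.exp (-c)| :=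
        abs_sub_le _ _ _
      have hdist : |(Kof c Lbar n : ℝ) * p n - (Kof c Lbar n : ℝ) * Real.exp (-c)| ≤
          kk n * (ε / 2 * Real.exp (-c)) := by
        rw [← mul_sub, abs_mul, abs_of_nonneg (by positivity : (0:ℝ) ≤ (Kof c Lbar n : ℝ))]
        exact mul_le_mul_of_nonneg_left hclo (by positivity)
      have : ε * (kk n * Real.exp (-c)) ≤
          |((M.trueIslandCount ω : ℝ)) - (Kof c Lbar n : ℝ) * p n| +
            kk n * (ε / 2 * Real.exp (-c)) := le_trans hω (le_trans htri (by linarith))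
      nlinarith [abs_nonneg (((M.trueIslandCount ω : ℝ)) - (Kof c Lbar n : ℝ) * p n)]
    have hmono : (M.μ {ω | ε * ((Kof c Lbar n : ℝ) * Real.exp (-c)) ≤
        |((M.trueIslandCount ω : ℝ)) - (Kof c Lbar n : ℝ) * Real.exp (-c)|}).toReal ≤
        (M.μ {ω | ε / 2 * kk n * Real.exp (-c) ≤
          |((M.trueIslandCount ω : ℝ)) - (Kof c Lbar n : ℝ) * p n|}).toReal :=
      ENNReal.toReal_mono (measure_ne_top _ _) (measure_mono hsub)
    refine le_trans hmono ?_
    have hcheb := M.cheb_bound hL1 h2L hK2 hapos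
    refine le_trans hcheb (le_of_eq ?_)
    rw [hBbdef]
end
end

section
/- Concentration of visible coverage (Lemma 2): Fix constants c > 0, L̄ > 0 and δ ∈ [0,1), and work in the asymptotic regime of the SSE model. Then for every ε > 0, Pr( |Φ_v − (1 − e^{−c(1−δ)})| > ε·(1 − e^{−c(1−δ)}) ) → 0 as n → ∞. -/
open Filter

noncomputable section

variable {n K L : ℕ} {δ : ℝ}

namespace VCC
open Finset

variable {n K L : ℕ} {δ : ℝ}

noncomputable def wt (δ : ℝ) (b : Bool) : ℝ := if b then δ else 1 - δ

noncomputable def wE (δ : ℝ) {L : ℕ} (η : Fin L → Bool) : ℝ := ∏ j, wt δ (η j)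

noncomputable def wR (δ : ℝ) (n : ℕ) {L : ℕ} (x : ZMod n × (Fin L → Bool)) : ℝ :=
  (n : ℝ)⁻¹ * wE δ x.2

lemma wt_nonneg (hδ0 : 0 ≤ δ) (hδ1 : δ ≤ 1) (b : Bool) : 0 ≤ wt δ b := by
  cases b <;> simp [wt] <;> linarith

lemma wE_nonneg (hδ0 : 0 ≤ δ) (hδ1 : δ ≤ 1) (η : Fin L → Bool) : 0 ≤ wE δ η :=
  Finset.prod_nonneg fun j _ => wt_nonneg hδ0 hδ1 _

lemma wR_nonneg (hδ0 : 0 ≤ δ) (hδ1 : δ ≤ 1) (x : ZMod n × (Fin L → Bool)) : 0 ≤ wR δ n x :=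
  mul_nonneg (by positivity) (wE_nonneg hδ0 hδ1 _)

lemma sum_wt : ∑ b : Bool, wt δ b = 1 := by simp [wt]

lemma sum_wE_piFinset (t : Fin L → Finset Bool) :
    ∑ η ∈ Fintype.piFinset t, wE δ η = ∏ j, ∑ b ∈ t j, wt δ b :=
  (Finset.prod_univ_sum t fun _ b => wt δ b).symm

lemma sum_wE : ∑ η : Fin L → Bool, wE δ η = 1 := by
  have h := sum_wE_piFinset (δ := δ) (fun _ : Fin L => (univ : Finset Bool))
  rw [Fintype.piFinset_univ] at h
  rw [h]
  have hb : wt δ true + wt δ false = 1 := by simp [wt]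
  simp [hb]

open Classical in
lemma sum_wE_constr (j₀ : Fin L) (b₀ : Bool) :
    ∑ η ∈ univ.filter (fun η : Fin L → Bool => η j₀ = b₀), wE δ η = wt δ b₀ := by
  classical
  have hset : univ.filter (fun η : Fin L → Bool => η j₀ = b₀)
      = Fintype.piFinset (fun j => if j = j₀ then ({b₀} : Finset Bool) else univ) := by
    ext η
    simp only [mem_filter, mem_univ, true_and, Fintype.mem_piFinset]
    constructor
    · intro h j; by_cases hj : j = j₀ <;> simp [hj, h]
    · intro h; have := h j₀; simpa using this
  rw [hset, sum_wE_piFinset]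
  rw [Finset.prod_eq_single j₀]
  · simp
  · intro j _ hj
    have hb : wt δ true + wt δ false = 1 := by simp [wt]
    simp [hj, hb]
  · simp


/-- Read at position σ with erasure pattern η misses target m. -/
def MissR {n L : ℕ} (m : ZMod n) (x : ZMod n × (Fin L → Bool)) : Prop :=
  ∀ j : Fin L, x.1 + ((j : ℕ) : ZMod n) = m → x.2 j = true

instance {n L : ℕ} (m : ZMod n) : DecidablePred (MissR (L := L) m) := fun x => by
  unfold MissR; infer_instance

lemma cast_inj_of_lt [NeZero n] {a b : ℕ} (ha : a < n) (hb : b < n)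
    (h : ((a : ℕ) : ZMod n) = b) : a = b := by
  have := congrArg ZMod.val h
  rwa [ZMod.val_natCast_of_lt ha, ZMod.val_natCast_of_lt hb] at this

/-- The window of positions σ from which a read covers m. -/
noncomputable def win {n : ℕ} (L : ℕ) (m : ZMod n) : Finset (ZMod n) :=
  univ.image (fun j : Fin L => m - ((j : ℕ) : ZMod n))

lemma win_inj [NeZero n] (hLn : L ≤ n) (m : ZMod n) :
    Function.Injective (fun j : Fin L => m - ((j : ℕ) : ZMod n)) := by
  intro j j' h
  simp only [sub_right_inj] at h
  exact Fin.ext (cast_inj_of_lt (lt_of_lt_of_le j.2 hLn) (lt_of_lt_of_le j'.2 hLn) h)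

lemma card_win [NeZero n] (hLn : L ≤ n) (m : ZMod n) : (win L m).card = L := by
  rw [win, Finset.card_image_of_injective _ (win_inj hLn m), card_univ, Fintype.card_fin]

open Classical in
/-- Per-read miss probability for a set `T` of targets with pairwise disjoint windows. -/
lemma readsum [NeZero n] (hLn : L ≤ n) (hδ0 : 0 ≤ δ) (hδ1 : δ ≤ 1)
    (T : Finset (ZMod n)) (hTL : T.card * L ≤ n)
    (hdisj : ∀ m ∈ T, ∀ m' ∈ T, m ≠ m' → Disjoint (win L m) (win L m')) :
    ∑ x ∈ univ.filter (fun x : ZMod n × (Fin L → Bool) => ∀ m ∈ T, MissR m x),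
      wR δ n x = ((n : ℝ) - (1 - δ) * (T.card * L)) / n := by
  classical
  -- rewrite as double sum
  rw [Finset.sum_filter, Fintype.sum_prod_type]
  -- inner sum computation
  have hinner : ∀ σ : ZMod n,
      (∑ η : Fin L → Bool, if (∀ m ∈ T, MissR m (σ, η)) then wR δ n (σ, η) else 0)
      = (n : ℝ)⁻¹ * (if σ ∈ T.biUnion (win L) then δ else 1) := by
    intro σ
    by_cases hσ : σ ∈ T.biUnion (win L)
    · simp only [hσ, if_true]
      obtain ⟨m₀, hm₀, hσw⟩ := Finset.mem_biUnion.mp hσ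
      obtain ⟨j₀, _, hj₀⟩ := Finset.mem_image.mp hσw
      -- σ = m₀ - j₀, i.e. σ + j₀ = m₀
      have hσj : σ + ((j₀ : ℕ) : ZMod n) = m₀ := by rw [← hj₀]; ring
      have hiff : ∀ η : Fin L → Bool, (∀ m ∈ T, MissR m (σ, η)) ↔ η j₀ = true := by
        intro η
        constructor
        · intro h; exact h m₀ hm₀ j₀ hσj
        · intro h m hm j hj
          -- σ + j = m so m - j = σ = m₀ - j₀, so windows of m, m₀ intersect
          have hmem : σ ∈ win L m := by
            rw [win, Finset.mem_image]
            exact ⟨j, mem_univ j, by rw [← hj]; ring⟩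
          have hmem₀ : σ ∈ win L m₀ := hσw
          have hmm₀ : m = m₀ := by
            by_contra hne
            exact Finset.disjoint_left.mp (hdisj m hm m₀ hm₀ hne) hmem hmem₀
          have hjj : ((j : ℕ) : ZMod n) = ((j₀ : ℕ) : ZMod n) := by
            have h2 : σ + ((j₀ : ℕ) : ZMod n) = m := by rw [hmm₀]; exact hσj
            exact add_left_cancel ((show σ + ((j:ℕ):ZMod n) = m from hj).trans h2.symm)
          have hjeq : j = j₀ := Fin.ext (cast_inj_of_lt (lt_of_lt_of_le j.2 hLn)
            (lt_of_lt_of_le j₀.2 hLn) hjj)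
          rw [hjeq]; exact h
      calc (∑ η : Fin L → Bool, if (∀ m ∈ T, MissR m (σ, η)) then wR δ n (σ, η) else 0)
          = ∑ η ∈ univ.filter (fun η : Fin L → Bool => η j₀ = true), wR δ n (σ, η) := by
            rw [Finset.sum_filter]
            exact Finset.sum_congr rfl (fun η _ => by rw [if_congr (hiff η) rfl rfl])
        _ = (n : ℝ)⁻¹ * ∑ η ∈ univ.filter (fun η : Fin L → Bool => η j₀ = true), wE δ η := by
            rw [Finset.mul_sum]; rfl
        _ = (n : ℝ)⁻¹ * δ := by rw [sum_wE_constr]; rfl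
    · simp only [hσ, if_false]
      have hall : ∀ η : Fin L → Bool, (∀ m ∈ T, MissR m (σ, η)) := by
        intro η m hm j hj
        exfalso
        apply hσ
        refine Finset.mem_biUnion.mpr ⟨m, hm, ?_⟩
        rw [win, Finset.mem_image]
        exact ⟨j, mem_univ j, by rw [← hj]; ring⟩
      calc (∑ η : Fin L → Bool, if (∀ m ∈ T, MissR m (σ, η)) then wR δ n (σ, η) else 0)
          = ∑ η : Fin L → Bool, wR δ n (σ, η) := by
            exact Finset.sum_congr rfl (fun η _ => by rw [if_pos (hall η)])
        _ = (n : ℝ)⁻¹ * ∑ η : Fin L → Bool, wE δ η := by rw [Finset.mul_sum]; rfl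
        _ = (n : ℝ)⁻¹ * 1 := by rw [sum_wE]
  rw [Finset.sum_congr rfl (fun σ _ => hinner σ)]
  -- count: biUnion of disjoint windows has card T.card * L
  have hcard : (T.biUnion (win L)).card = T.card * L := by
    rw [Finset.card_biUnion (fun m hm m' hm' hne => hdisj m hm m' hm' hne)]
    rw [Finset.sum_congr rfl (fun m _ => card_win hLn m), Finset.sum_const, smul_eq_mul]
  rw [← Finset.mul_sum]
  have hsum : ∑ σ : ZMod n, (if σ ∈ T.biUnion (win L) then δ else (1:ℝ))
      = (n : ℝ) + ((T.card * L : ℕ) : ℝ) * (δ - 1) := by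
    have h1 : ∀ σ : ZMod n, (if σ ∈ T.biUnion (win L) then δ else (1:ℝ))
        = 1 + (if σ ∈ T.biUnion (win L) then δ - 1 else 0) := by
      intro σ; by_cases h : σ ∈ T.biUnion (win L) <;> simp [h]
    rw [Finset.sum_congr rfl fun σ _ => h1 σ, Finset.sum_add_distrib, Finset.sum_const,
      Finset.sum_ite_mem, Finset.univ_inter, Finset.sum_const, hcard]
    simp [ZMod.card]
  rw [hsum]
  have hn0 : (n : ℝ) ≠ 0 := Nat.cast_ne_zero.mpr (NeZero.ne n)
  push_cast
  field_simp
  ring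


noncomputable def W (δ : ℝ) (n : ℕ) {K L : ℕ}
    (x : (Fin K → ZMod n) × (Fin K → Fin L → Bool)) : ℝ :=
  ∏ i, wR δ n (x.1 i, x.2 i)

lemma W_nonneg [NeZero n] (hδ0 : 0 ≤ δ) (hδ1 : δ ≤ 1)
    (x : (Fin K → ZMod n) × (Fin K → Fin L → Bool)) : 0 ≤ W δ n x :=
  Finset.prod_nonneg fun _ _ => wR_nonneg hδ0 hδ1 _

lemma sum_W_forall [NeZero n] (Q : Fin K → (ZMod n × (Fin L → Bool)) → Prop)
    [∀ i, DecidablePred (Q i)] :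
    ∑ x : (Fin K → ZMod n) × (Fin K → Fin L → Bool),
      (if ∀ i, Q i (x.1 i, x.2 i) then W δ n x else 0)
    = ∏ i, ∑ y ∈ univ.filter (Q i), wR δ n y := by
  classical
  have h1 : ∀ i : Fin K, (∑ y ∈ univ.filter (Q i), wR δ n y)
      = ∑ y ∈ (univ : Finset (ZMod n × (Fin L → Bool))), if Q i y then wR δ n y else 0 :=
    fun i => Finset.sum_filter _ _
  rw [Finset.prod_congr rfl (fun i _ => h1 i),
    Finset.prod_univ_sum (fun _ => (univ : Finset (ZMod n × (Fin L → Bool))))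
      (fun i y => if Q i y then wR δ n y else 0)]
  rw [Fintype.piFinset_univ]
  refine (Fintype.sum_bijective (Equiv.arrowProdEquivProdArrow (Fin K) (fun _ => ZMod n) (fun _ => Fin L → Bool))
    (Equiv.bijective _) _ _ ?_).symm
  intro f
  rw [Finset.prod_ite_zero]
  have h2 : (∀ i ∈ (univ : Finset (Fin K)), Q i (f i)) ↔
      (∀ i, Q i (((Equiv.arrowProdEquivProdArrow (Fin K) (fun _ => ZMod n) (fun _ => Fin L → Bool)) f).1 i,
        ((Equiv.arrowProdEquivProdArrow (Fin K) (fun _ => ZMod n) (fun _ => Fin L → Bool)) f).2 i)) := by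
    simp [Equiv.arrowProdEquivProdArrow]
  by_cases hq : ∀ i, Q i (f i)
  · rw [if_pos (fun i _ => hq i), if_pos (h2.mp (fun i _ => hq i))]
    rfl
  · rw [if_neg (fun h => hq (fun i => h i (mem_univ i))),
      if_neg (fun h => hq (fun i => by simpa using h2.mpr h i (mem_univ i)))]

/-- All K reads miss every target in T. -/
def missT {n K L : ℕ} (T : Finset (ZMod n))
    (x : (Fin K → ZMod n) × (Fin K → Fin L → Bool)) : Prop :=
  ∀ i, ∀ m ∈ T, MissR m (x.1 i, x.2 i)

instance {n K L : ℕ} (T : Finset (ZMod n)) : DecidablePred (missT (K := K) (L := L) T) :=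
  fun x => by unfold missT; infer_instance

lemma sum_W_missT [NeZero n] (hLn : L ≤ n) (hδ0 : 0 ≤ δ) (hδ1 : δ ≤ 1)
    (T : Finset (ZMod n)) (hTL : T.card * L ≤ n)
    (hdisj : ∀ m ∈ T, ∀ m' ∈ T, m ≠ m' → Disjoint (win L m) (win L m')) :
    ∑ x : (Fin K → ZMod n) × (Fin K → Fin L → Bool),
      (if missT T x then W δ n x else 0)
    = (((n : ℝ) - (1 - δ) * (T.card * L)) / n) ^ K := by
  classical
  have hcongr : ∀ x : (Fin K → ZMod n) × (Fin K → Fin L → Bool),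
      (if missT T x then W δ n x else 0)
      = (if ∀ i, (fun (_ : Fin K) y => ∀ m ∈ T, MissR m y) i (x.1 i, x.2 i)
          then W δ n x else 0) :=
    fun x => if_congr Iff.rfl rfl rfl
  rw [Finset.sum_congr rfl (fun x _ => hcongr x), sum_W_forall (fun _ y => ∀ m ∈ T, MissR m y)]
  rw [Finset.prod_congr rfl (fun i _ => readsum hLn hδ0 hδ1 T hTL hdisj)]
  rw [Finset.prod_const, card_univ, Fintype.card_fin]

lemma sum_W_one [NeZero n] (hn : L ≤ n) (hδ0 : 0 ≤ δ) (hδ1 : δ ≤ 1) :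
    ∑ x : (Fin K → ZMod n) × (Fin K → Fin L → Bool), W δ n x = 1 := by
  classical
  have h := sum_W_missT (K := K) (δ := δ) hn hδ0 hδ1 ∅ (by simp) (by simp)
  simp only [missT, Finset.notMem_empty] at h
  simp only [Finset.card_empty, Nat.cast_zero, zero_mul, mul_zero, sub_zero] at h
  rw [div_self (Nat.cast_ne_zero.mpr (NeZero.ne n)), one_pow] at h
  rw [← h]
  apply Finset.sum_congr rfl
  intro x _
  rw [if_pos]
  intro i m hm
  exact absurd hm (by simp)

/-- Per-read miss probability to the K. -/
noncomputable def pK (δ : ℝ) (n K L : ℕ) : ℝ := (((n : ℝ) - (1 - δ) * L) / n) ^ K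

lemma sum_W_missOne [NeZero n] (hLn : L ≤ n) (hδ0 : 0 ≤ δ) (hδ1 : δ ≤ 1) (m : ZMod n) :
    ∑ x : (Fin K → ZMod n) × (Fin K → Fin L → Bool),
      (if missT {m} x then W δ n x else 0) = pK δ n K L := by
  have h := sum_W_missT (K := K) (δ := δ) hLn hδ0 hδ1 {m} (by simpa) (by simp)
  simpa [pK] using h

/-- positions near m (windows possibly intersecting). -/
noncomputable def near {n : ℕ} (L : ℕ) (m : ZMod n) : Finset (ZMod n) :=
  univ.image (fun q : Fin L × Fin L => m - ((q.1 : ℕ) : ZMod n) + ((q.2 : ℕ) : ZMod n))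

lemma card_near {n L : ℕ} (m : ZMod n) : (near L m).card ≤ L ^ 2 := by
  calc (near L m).card ≤ (univ : Finset (Fin L × Fin L)).card := Finset.card_image_le
    _ = L ^ 2 := by simp [sq]

lemma win_disjoint_of_not_near {n L : ℕ} (hL1 : 0 < L) {m m' : ZMod n}
    (h : m' ∉ near L m) : m ≠ m' ∧ Disjoint (win L m) (win L m') := by
  constructor
  · rintro rfl
    exact h (Finset.mem_image.mpr ⟨(⟨0, hL1⟩, ⟨0, hL1⟩), mem_univ _, by simp⟩)
  · rw [Finset.disjoint_left]
    intro σ h1 h2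
    obtain ⟨j, _, hj⟩ := Finset.mem_image.mp h1
    obtain ⟨j', _, hj'⟩ := Finset.mem_image.mp h2
    exact h (Finset.mem_image.mpr ⟨(j, j'), mem_univ _, by linear_combination hj.trans hj'.symm⟩)

lemma sum_W_missPair [NeZero n] (hLn : L ≤ n) (h2L : 2 * L ≤ n)
    (hδ0 : 0 ≤ δ) (hδ1 : δ ≤ 1) (hL1 : 0 < L) {m m' : ZMod n} (hfar : m' ∉ near L m) :
    ∑ x : (Fin K → ZMod n) × (Fin K → Fin L → Bool),
      (if missT {m, m'} x then W δ n x else 0)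
      = (((n : ℝ) - (1 - δ) * (2 * L)) / n) ^ K := by
  obtain ⟨hne, hdisj⟩ := win_disjoint_of_not_near hL1 hfar
  have hcard : ({m, m'} : Finset (ZMod n)).card = 2 := Finset.card_pair hne
  have h := sum_W_missT (K := K) (δ := δ) hLn hδ0 hδ1 {m, m'} (by rw [hcard]; exact h2L)
    (by
      intro a ha b hb hab
      simp only [Finset.mem_insert, Finset.mem_singleton] at ha hb
      rcases ha with rfl | rfl <;> rcases hb with rfl | rfl
      · exact absurd rfl hab
      · exact hdisj
      · exact hdisj.symm
      · exact absurd rfl hab)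
  rw [h, hcard]
  norm_num

def covered {n K L : ℕ} (m : ZMod n)
    (x : (Fin K → ZMod n) × (Fin K → Fin L → Bool)) : Prop :=
  ∃ (i : Fin K) (j : Fin L), x.1 i + ((j : ℕ) : ZMod n) = m ∧ x.2 i j = false

instance {n K L : ℕ} (m : ZMod n) : DecidablePred (covered (K := K) (L := L) m) :=
  fun x => by unfold covered; infer_instance

lemma covered_iff {n K L : ℕ} (m : ZMod n)
    (x : (Fin K → ZMod n) × (Fin K → Fin L → Bool)) :
    covered m x ↔ ¬ missT {m} x := by
  constructor
  · rintro ⟨i, j, hij, hfalse⟩ hmiss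
    have h2 : x.2 i j = true := hmiss i m (Finset.mem_singleton_self m) j hij
    exact Bool.noConfusion (h2.symm.trans hfalse)
  · intro h
    by_contra hc
    apply h
    intro i m' hm' j hj
    rw [Finset.mem_singleton] at hm'; subst hm'
    by_contra htrue
    exact hc ⟨i, j, hj, Bool.eq_false_iff.mpr htrue⟩

noncomputable def phiC {n K L : ℕ}
    (x : (Fin K → ZMod n) × (Fin K → Fin L → Bool)) : ℝ :=
  (Set.ncard {m : ZMod n | covered m x} : ℝ) / n

lemma phiC_eq [NeZero n]
    (x : (Fin K → ZMod n) × (Fin K → Fin L → Bool)) :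
    phiC x = (∑ m : ZMod n, (1 - if missT {m} x then (1:ℝ) else 0)) / n := by
  have h1 : ∀ m : ZMod n, (1 - if missT {m} x then (1:ℝ) else 0)
      = if covered m x then (1:ℝ) else 0 := by
    intro m; by_cases h : missT {m} x
    · rw [if_pos h, if_neg (fun hc => (covered_iff m x).mp hc h)]; ring
    · rw [if_neg h, if_pos ((covered_iff m x).mpr h)]; ring
  rw [Finset.sum_congr rfl fun m _ => h1 m, Finset.sum_boole]
  unfold phiC
  congr 2
  rw [Set.ncard_eq_toFinset_card', Set.toFinset_setOf]

lemma var_bound [NeZero n] (hδ0 : 0 ≤ δ) (hδ1 : δ ≤ 1) (hL1 : 0 < L) (h2L : 2 * L ≤ n) :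
    ∑ x : (Fin K → ZMod n) × (Fin K → Fin L → Bool),
      W δ n x * (phiC x - (1 - pK δ n K L)) ^ 2 ≤ (L : ℝ) ^ 2 / n := by
  classical
  have hn : 0 < n := Nat.pos_of_ne_zero (NeZero.ne n)
  have hn0 : (n : ℝ) ≠ 0 := Nat.cast_ne_zero.mpr (NeZero.ne n)
  have hnR : (0:ℝ) < n := by exact_mod_cast hn
  have hLn : L ≤ n := by omega
  set p := pK δ n K L with hp
  set g : ZMod n → (Fin K → ZMod n) × (Fin K → Fin L → Bool) → ℝ :=
    fun m x => if missT {m} x then (1:ℝ) else 0 with hg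
  -- step 1 : deviation as a sum
  have hphi : ∀ x, phiC x - (1 - p) = (∑ m : ZMod n, (p - g m x)) / n := by
    intro x
    have hsum : (∑ m : ZMod n, (p - g m x))
        = (∑ m : ZMod n, (1 - g m x)) - (n : ℝ) * (1 - p) := by
      rw [Finset.sum_sub_distrib, Finset.sum_sub_distrib, Finset.sum_const, Finset.sum_const]
      simp only [card_univ, ZMod.card, nsmul_eq_mul]
      ring
    rw [phiC_eq, hsum]
    field_simp
    rfl
  -- step 2 : the key quadratic bound
  have hWnn : ∀ x : (Fin K → ZMod n) × (Fin K → Fin L → Bool), 0 ≤ W δ n x :=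
    fun x => W_nonneg hδ0 hδ1 x
  -- cross term
  set C : ZMod n → ZMod n → ℝ := fun m m' =>
    ∑ x : (Fin K → ZMod n) × (Fin K → Fin L → Bool),
      W δ n x * (p - g m x) * (p - g m' x) with hCdef
  have hWg : ∀ m : ZMod n,
      ∑ x : (Fin K → ZMod n) × (Fin K → Fin L → Bool), W δ n x * g m x = p := by
    intro m
    rw [hp, ← sum_W_missOne (K := K) hLn hδ0 hδ1 m]
    refine Finset.sum_congr rfl fun x _ => ?_
    by_cases h : missT {m} x <;> simp [hg, h]
  have hWgg : ∀ m m' : ZMod n,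
      ∑ x : (Fin K → ZMod n) × (Fin K → Fin L → Bool), W δ n x * g m x * g m' x
      = ∑ x : (Fin K → ZMod n) × (Fin K → Fin L → Bool),
          (if missT {m, m'} x then W δ n x else 0) := by
    intro m m'
    refine Finset.sum_congr rfl fun x _ => ?_
    have hiff : (missT {m} x ∧ missT {m'} x) ↔ missT ({m, m'} : Finset (ZMod n)) x := by
      constructor
      · rintro ⟨h1, h2⟩ i a ha
        rcases Finset.mem_insert.mp ha with rfl | ha'
        · exact h1 i a (Finset.mem_singleton_self a)
        · exact h2 i a ha'
      · intro h
        exact ⟨fun i a ha => h i a (Finset.mem_insert.mpr (Or.inl (Finset.mem_singleton.mp ha))),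
          fun i a ha => h i a (Finset.mem_insert.mpr (Or.inr ha))⟩
    by_cases h1 : missT {m} x <;> by_cases h2 : missT {m'} x
    · rw [if_pos (hiff.mp ⟨h1, h2⟩)]; simp [hg, h1, h2]
    · rw [if_neg (fun h => h2 (hiff.mpr h).2)]; simp [hg, h1, h2]
    · rw [if_neg (fun h => h1 (hiff.mpr h).1)]; simp [hg, h1, h2]
    · rw [if_neg (fun h => h1 (hiff.mpr h).1)]; simp [hg, h1, h2]
  have hsumW : ∑ x : (Fin K → ZMod n) × (Fin K → Fin L → Bool), W δ n x = 1 :=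
    sum_W_one hLn hδ0 hδ1
  have hCval : ∀ m m' : ZMod n, C m m' =
      (∑ x : (Fin K → ZMod n) × (Fin K → Fin L → Bool),
        (if missT {m, m'} x then W δ n x else 0)) - p ^ 2 := by
    intro m m'
    have hexp : ∀ x, W δ n x * (p - g m x) * (p - g m' x)
        = p ^ 2 * W δ n x - p * (W δ n x * g m' x) - p * (W δ n x * g m x)
          + W δ n x * g m x * g m' x := by intro x; ring
    have h0 : C m m' = ∑ x : (Fin K → ZMod n) × (Fin K → Fin L → Bool),
        (p ^ 2 * W δ n x - p * (W δ n x * g m' x) - p * (W δ n x * g m x)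
          + W δ n x * g m x * g m' x) :=
      Finset.sum_congr rfl fun x _ => hexp x
    rw [h0, Finset.sum_add_distrib, Finset.sum_sub_distrib, Finset.sum_sub_distrib,
      ← Finset.mul_sum, ← Finset.mul_sum, ← Finset.mul_sum, hsumW, hWg, hWg, hWgg]
    ring
  -- bound on C
  have hCbound : ∀ m m' : ZMod n, C m m' ≤ if m' ∈ near L m then 1 else 0 := by
    intro m m'
    by_cases hnear : m' ∈ near L m
    · rw [if_pos hnear, hCval]
      have hE2le : (∑ x : (Fin K → ZMod n) × (Fin K → Fin L → Bool),
          (if missT {m, m'} x then W δ n x else 0)) ≤ 1 := by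
        rw [← hsumW]
        refine Finset.sum_le_sum fun x _ => ?_
        by_cases h : missT {m, m'} x <;> simp [h, hWnn x]
      nlinarith [sq_nonneg p]
    · rw [if_neg hnear, hCval, sum_W_missPair hLn h2L hδ0 hδ1 hL1 hnear]
      have hc : (0:ℝ) ≤ (1 - δ) * L := by
        have : (0:ℝ) ≤ (L:ℝ) := Nat.cast_nonneg L
        nlinarith
      have hcn : (1 - δ) * (2 * (L:ℝ)) ≤ n := by
        have h2 : (2 * L : ℝ) ≤ n := by exact_mod_cast h2L
        nlinarith
      have hbase : ((n : ℝ) - (1 - δ) * (2 * L)) / n ≤ (((n : ℝ) - (1 - δ) * L) / n) ^ 2 := by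
        rw [div_pow, div_le_div_iff₀ hnR (by positivity)]
        nlinarith [sq_nonneg ((1 - δ) * (L:ℝ))]
      have hq0 : (0:ℝ) ≤ ((n : ℝ) - (1 - δ) * (2 * L)) / n := by
        apply div_nonneg _ hnR.le; linarith
      have hpow : (((n : ℝ) - (1 - δ) * (2 * L)) / n) ^ K ≤ p ^ 2 := by
        calc (((n : ℝ) - (1 - δ) * (2 * L)) / n) ^ K
            ≤ ((((n : ℝ) - (1 - δ) * L) / n) ^ 2) ^ K := pow_le_pow_left₀ hq0 hbase K
          _ = p ^ 2 := by rw [hp]; unfold pK; rw [← pow_mul, ← pow_mul, Nat.mul_comm 2 K]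
      linarith
  -- assemble
  have key : ∑ x : (Fin K → ZMod n) × (Fin K → Fin L → Bool),
      W δ n x * (∑ m : ZMod n, (p - g m x)) ^ 2 ≤ (n : ℝ) * L ^ 2 := by
    have hswap : ∑ x : (Fin K → ZMod n) × (Fin K → Fin L → Bool),
        W δ n x * (∑ m : ZMod n, (p - g m x)) ^ 2
        = ∑ m : ZMod n, ∑ m' : ZMod n, C m m' := by
      have hper : ∀ x, W δ n x * (∑ m : ZMod n, (p - g m x)) ^ 2
          = ∑ m : ZMod n, ∑ m' : ZMod n, W δ n x * (p - g m x) * (p - g m' x) := by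
        intro x
        rw [sq, Finset.sum_mul_sum]
        rw [Finset.mul_sum]
        refine Finset.sum_congr rfl fun m _ => ?_
        rw [Finset.mul_sum]
        refine Finset.sum_congr rfl fun m' _ => ?_
        ring
      rw [Finset.sum_congr rfl fun x _ => hper x]
      rw [Finset.sum_comm]
      refine Finset.sum_congr rfl fun m _ => ?_
      rw [Finset.sum_comm]
    rw [hswap]
    calc ∑ m : ZMod n, ∑ m' : ZMod n, C m m'
        ≤ ∑ m : ZMod n, ∑ m' : ZMod n, (if m' ∈ near L m then (1:ℝ) else 0) :=
          Finset.sum_le_sum fun m _ => Finset.sum_le_sum fun m' _ => hCbound m m'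
      _ = ∑ m : ZMod n, ((near L m).card : ℝ) := by
          refine Finset.sum_congr rfl fun m _ => ?_
          rw [Finset.sum_boole]
          congr 1
          rw [Finset.filter_mem_eq_inter, Finset.univ_inter]
      _ ≤ ∑ m : ZMod n, ((L:ℝ) ^ 2) := by
          refine Finset.sum_le_sum fun m _ => ?_
          exact_mod_cast Nat.cast_le.mpr (by exact_mod_cast card_near m)
      _ = (n : ℝ) * L ^ 2 := by
          rw [Finset.sum_const, card_univ, ZMod.card, nsmul_eq_mul]
  calc ∑ x : (Fin K → ZMod n) × (Fin K → Fin L → Bool),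
        W δ n x * (phiC x - (1 - p)) ^ 2
      = ∑ x : (Fin K → ZMod n) × (Fin K → Fin L → Bool),
          W δ n x * (∑ m : ZMod n, (p - g m x)) ^ 2 / n ^ 2 := by
        refine Finset.sum_congr rfl fun x _ => ?_
        rw [hphi x, div_pow, mul_div_assoc]
    _ = (∑ x : (Fin K → ZMod n) × (Fin K → Fin L → Bool),
          W δ n x * (∑ m : ZMod n, (p - g m x)) ^ 2) / n ^ 2 := by
        rw [Finset.sum_div]
    _ ≤ ((n : ℝ) * L ^ 2) / n ^ 2 := by
        gcongr
    _ = (L : ℝ) ^ 2 / n := by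
        field_simp

open Classical in
lemma cheb [NeZero n] (hδ0 : 0 ≤ δ) (hδ1 : δ ≤ 1) (hL1 : 0 < L) (h2L : 2 * L ≤ n)
    {t : ℝ} (ht : 0 < t) :
    ∑ x ∈ univ.filter
        (fun x : (Fin K → ZMod n) × (Fin K → Fin L → Bool) =>
          t < |phiC x - (1 - pK δ n K L)|),
      W δ n x ≤ (L : ℝ) ^ 2 / (n * t ^ 2) := by
  classical
  have hn0 : (n : ℝ) ≠ 0 := Nat.cast_ne_zero.mpr (NeZero.ne n)
  have hnR : (0:ℝ) < n := by
    have : 0 < n := Nat.pos_of_ne_zero (NeZero.ne n); exact_mod_cast this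
  have ht2 : (0:ℝ) < t ^ 2 := by positivity
  calc ∑ x ∈ univ.filter
        (fun x : (Fin K → ZMod n) × (Fin K → Fin L → Bool) =>
          t < |phiC x - (1 - pK δ n K L)|), W δ n x
      ≤ ∑ x ∈ univ.filter
        (fun x : (Fin K → ZMod n) × (Fin K → Fin L → Bool) =>
          t < |phiC x - (1 - pK δ n K L)|),
          W δ n x * (phiC x - (1 - pK δ n K L)) ^ 2 / t ^ 2 := by
        refine Finset.sum_le_sum fun x hx => ?_
        have hx' := (Finset.mem_filter.mp hx).2
        rw [le_div_iff₀ ht2]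
        have h1 : t ^ 2 ≤ (phiC x - (1 - pK δ n K L)) ^ 2 := by
          have := pow_le_pow_left₀ ht.le hx'.le 2
          rwa [sq_abs] at this
        exact mul_le_mul_of_nonneg_left h1 (W_nonneg hδ0 hδ1 x)
    _ ≤ ∑ x : (Fin K → ZMod n) × (Fin K → Fin L → Bool),
          W δ n x * (phiC x - (1 - pK δ n K L)) ^ 2 / t ^ 2 := by
        refine Finset.sum_le_sum_of_subset_of_nonneg (Finset.filter_subset _ _) fun x _ _ => ?_
        have := W_nonneg (n := n) (δ := δ) hδ0 hδ1 x
        positivity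
    _ = (∑ x : (Fin K → ZMod n) × (Fin K → Fin L → Bool),
          W δ n x * (phiC x - (1 - pK δ n K L)) ^ 2) / t ^ 2 := by
        rw [Finset.sum_div]
    _ ≤ ((L : ℝ) ^ 2 / n) / t ^ 2 := by
        gcongr
        exact var_bound hδ0 hδ1 hL1 h2L
    _ = (L : ℝ) ^ 2 / (n * t ^ 2) := by
        rw [div_div]


section Bridge
open MeasureTheory ProbabilityTheory Finset

variable {n K L : ℕ} {δ : ℝ}

/-- The combined random vector. -/
def Vf (M : SSE n K L δ) : M.Ω → (Fin K → ZMod n) × (Fin K → Fin L → Bool) :=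
  fun ω => (fun i => M.S i ω, fun i j => M.E i j ω)

lemma measurable_Vf (M : SSE n K L δ) : Measurable (Vf M) :=
  Measurable.prodMk (measurable_pi_lambda _ fun i => M.measS i)
    (measurable_pi_lambda _ fun i => measurable_pi_lambda _ fun j => M.measE i j)

lemma atom_measure [NeZero n] (M : SSE n K L δ) (hδ0 : 0 ≤ δ) (hδ1 : δ ≤ 1)
    (y : (Fin K → ZMod n) × (Fin K → Fin L → Bool)) :
    M.μ (Vf M ⁻¹' {y}) = ENNReal.ofReal (W δ n y) := by
  classical
  set sets : ∀ t : Fin K ⊕ (Fin K × Fin L), Set (sseType n K L t) := fun t =>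
    match t with
    | .inl i => ({y.1 i} : Set (ZMod n))
    | .inr p => ({y.2 p.1 p.2} : Set Bool) with hsets
  have hmeas : ∀ t ∈ (univ : Finset (Fin K ⊕ (Fin K × Fin L))),
      MeasurableSet[sseTypeMS n K L t] (sets t) := by
    rintro (i | p) _
    · exact measurableSet_singleton (α := ZMod n) (y.1 i)
    · exact measurableSet_singleton (α := Bool) (y.2 p.1 p.2)
  have hset : Vf M ⁻¹' {y} = ⋂ t ∈ (univ : Finset (Fin K ⊕ (Fin K × Fin L))),
      sseVars M.S M.E t ⁻¹' sets t := by
    ext ω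
    simp only [Set.mem_preimage, Set.mem_singleton_iff, Set.mem_iInter, Finset.mem_univ,
      forall_true_left, Sum.forall, Prod.forall, Vf, Prod.ext_iff, funext_iff, sseVars, hsets]
    exact Iff.rfl
  rw [hset, (iIndepFun_iff_measure_inter_preimage_eq_mul.mp M.indep) univ hmeas,
    Fintype.prod_sum_type]
  have hS : ∀ i : Fin K, M.μ (sseVars M.S M.E (.inl i) ⁻¹' sets (.inl i))
      = (n : ENNReal)⁻¹ := fun i => M.unifS i (y.1 i)
  have hE : ∀ p : Fin K × Fin L, M.μ (sseVars M.S M.E (.inr p) ⁻¹' sets (.inr p))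
      = ENNReal.ofReal (wt δ (y.2 p.1 p.2)) := by
    rintro ⟨i, j⟩
    show M.μ (M.E i j ⁻¹' {y.2 i j}) = _
    cases hb : y.2 i j
    · have hc : M.E i j ⁻¹' {false} = {ω | M.E i j ω = true}ᶜ := by
        ext ω; simp
      rw [hc, measure_compl (show MeasurableSet {ω | M.E i j ω = true} from
        (M.measE i j) (measurableSet_singleton true)) (measure_ne_top M.μ _),
        measure_univ, M.bernE i j]
      rw [show wt δ false = 1 - δ from rfl, ENNReal.ofReal_sub _ hδ0, ENNReal.ofReal_one]
    · have : M.E i j ⁻¹' {true} = {ω | M.E i j ω = true} := rfl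
      rw [this, M.bernE i j]
      rfl
  rw [Finset.prod_congr rfl (fun i _ => hS i), Finset.prod_congr rfl (fun p _ => hE p)]
  -- now equate with ofReal (W δ n y)
  have hnR : (0:ℝ) < n := by
    have : 0 < n := Nat.pos_of_ne_zero (NeZero.ne n); exact_mod_cast this
  have hW : ENNReal.ofReal (W δ n y)
      = ∏ i : Fin K, ((n : ENNReal)⁻¹ * ∏ j : Fin L, ENNReal.ofReal (wt δ (y.2 i j))) := by
    rw [W, ENNReal.ofReal_prod_of_nonneg (fun i _ => wR_nonneg hδ0 hδ1 _)]
    refine Finset.prod_congr rfl fun i _ => ?_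
    rw [wR, ENNReal.ofReal_mul (by positivity)]
    congr 1
    · rw [ENNReal.ofReal_inv_of_pos hnR, ENNReal.ofReal_natCast]
    · exact ENNReal.ofReal_prod_of_nonneg (fun j _ => wt_nonneg hδ0 hδ1 _)
  rw [hW, Finset.prod_mul_distrib]
  congr 1
  rw [Fintype.prod_prod_type]

open Classical in
lemma meas_eq_sum [NeZero n] (M : SSE n K L δ) (hδ0 : 0 ≤ δ) (hδ1 : δ ≤ 1)
    (Q : (Fin K → ZMod n) × (Fin K → Fin L → Bool) → Prop) :
    (M.μ {ω | Q (Vf M ω)}).toReal = ∑ x ∈ univ.filter Q, W δ n x := by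
  classical
  have hset : {ω | Q (Vf M ω)} = ⋃ x ∈ univ.filter Q, Vf M ⁻¹' {x} := by
    ext ω
    simp only [Set.mem_setOf_eq, Set.mem_iUnion, Finset.mem_filter, Finset.mem_univ, true_and,
      Set.mem_preimage, Set.mem_singleton_iff]
    exact ⟨fun h => ⟨Vf M ω, h, rfl⟩, fun ⟨x, hx, hvx⟩ => hvx ▸ hx⟩
  rw [hset, measure_biUnion_finset ?hd ?hm]
  case hd =>
    intro x _ x' _ hxx'
    exact Set.disjoint_left.mpr fun ω h1 h2 =>
      hxx' (h1.symm.trans (h2 : Vf M ω = x'))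
  case hm =>
    intro x _
    exact measurable_Vf M (measurableSet_singleton x)
  rw [Finset.sum_congr rfl (fun x _ => atom_measure M hδ0 hδ1 x),
    ← ENNReal.ofReal_sum_of_nonneg (fun x _ => W_nonneg hδ0 hδ1 x),
    ENNReal.toReal_ofReal (Finset.sum_nonneg (fun x _ => W_nonneg hδ0 hδ1 x))]

end Bridge

section Asymp
open Real

variable {c Lbar δ : ℝ}

lemma tendsto_log_div : Tendsto (fun x : ℝ => Real.log x / x) atTop (nhds 0) := by
  have h := Real.tendsto_pow_log_div_mul_add_atTop 1 0 1 one_ne_zero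
  simpa using h

lemma tendsto_logsq_div : Tendsto (fun x : ℝ => (Real.log x) ^ 2 / x) atTop (nhds 0) := by
  have h := Real.tendsto_pow_log_div_mul_add_atTop 1 0 2 one_ne_zero
  simpa using h

lemma tendsto_log_div_nat : Tendsto (fun n : ℕ => Real.log n / n) atTop (nhds 0) :=
  tendsto_log_div.comp tendsto_natCast_atTop_atTop

lemma tendsto_logsq_div_nat : Tendsto (fun n : ℕ => (Real.log n) ^ 2 / n) atTop (nhds 0) :=
  tendsto_logsq_div.comp tendsto_natCast_atTop_atTop

lemma Lof_pos (hLbar : 0 < Lbar) {n : ℕ} (hn : 2 ≤ n) : 0 < Lof Lbar n := by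
  rw [Lof]
  refine Nat.ceil_pos.mpr (mul_pos hLbar (Real.logb_pos (by norm_num) ?_))
  exact_mod_cast (by omega : 1 < n)

lemma Lof_le (hLbar : 0 < Lbar) {n : ℕ} (hn : 2 ≤ n) :
    (Lof Lbar n : ℝ) ≤ (Lbar / Real.log 2) * Real.log n + 1 := by
  have h1 : (0:ℝ) ≤ Lbar * Real.logb 2 n := by
    have : (1:ℝ) ≤ n := by exact_mod_cast (by omega : 1 ≤ n)
    exact mul_nonneg hLbar.le (Real.logb_nonneg (by norm_num) this)
  have h2 := (Nat.ceil_lt_add_one h1).le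
  calc (Lof Lbar n : ℝ) ≤ Lbar * Real.logb 2 n + 1 := h2
    _ = (Lbar / Real.log 2) * Real.log n + 1 := by
        rw [Real.logb]; ring

lemma tendsto_L_div (hLbar : 0 < Lbar) :
    Tendsto (fun n : ℕ => (Lof Lbar n : ℝ) / n) atTop (nhds 0) := by
  have hU : Tendsto (fun n : ℕ => (Lbar / Real.log 2) * (Real.log n / n) + 1 / n)
      atTop (nhds 0) := by
    have := (tendsto_log_div_nat.const_mul (Lbar / Real.log 2)).add
      tendsto_one_div_atTop_nhds_zero_nat
    simpa using this
  refine squeeze_zero' ?_ ?_ hU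
  · filter_upwards [eventually_ge_atTop 2] with n hn
    positivity
  · filter_upwards [eventually_ge_atTop 2] with n hn
    have hnR : (0:ℝ) < n := by exact_mod_cast (by omega : 0 < n)
    have := Lof_le hLbar hn
    rw [div_le_iff₀ hnR]
    calc (Lof Lbar n : ℝ) ≤ (Lbar / Real.log 2) * Real.log n + 1 := this
      _ = ((Lbar / Real.log 2) * (Real.log n / n) + 1 / n) * n := by field_simp
    
lemma tendsto_Lsq_div (hLbar : 0 < Lbar) :
    Tendsto (fun n : ℕ => (Lof Lbar n : ℝ) ^ 2 / n) atTop (nhds 0) := by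
  have hU : Tendsto (fun n : ℕ => (Lbar / Real.log 2) ^ 2 * ((Real.log n) ^ 2 / n)
      + 2 * (Lbar / Real.log 2) * (Real.log n / n) + 1 / n) atTop (nhds 0) := by
    have := ((tendsto_logsq_div_nat.const_mul ((Lbar / Real.log 2) ^ 2)).add
      (tendsto_log_div_nat.const_mul (2 * (Lbar / Real.log 2)))).add
      tendsto_one_div_atTop_nhds_zero_nat
    simpa using this
  refine squeeze_zero' ?_ ?_ hU
  · filter_upwards [eventually_ge_atTop 2] with n hn
    positivity
  · filter_upwards [eventually_ge_atTop 2] with n hn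
    have hnR : (0:ℝ) < n := by exact_mod_cast (by omega : 0 < n)
    have hlog : (0:ℝ) ≤ Real.log n := Real.log_nonneg (by exact_mod_cast (by omega : 1 ≤ n))
    have h1 := Lof_le hLbar hn
    have h0 : (0:ℝ) ≤ (Lof Lbar n : ℝ) := Nat.cast_nonneg _
    have hsq : (Lof Lbar n : ℝ) ^ 2 ≤ ((Lbar / Real.log 2) * Real.log n + 1) ^ 2 :=
      pow_le_pow_left₀ h0 h1 2
    rw [div_le_iff₀ hnR]
    calc (Lof Lbar n : ℝ) ^ 2 ≤ ((Lbar / Real.log 2) * Real.log n + 1) ^ 2 := hsq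
      _ = ((Lbar / Real.log 2) ^ 2 * ((Real.log n) ^ 2 / n)
            + 2 * (Lbar / Real.log 2) * (Real.log n / n) + 1 / n) * n := by
          field_simp; ring

lemma KL_bounds (hc : 0 < c) (hLbar : 0 < Lbar) {n : ℕ} (hn : 2 ≤ n) :
    c ≤ (Kof c Lbar n : ℝ) * (Lof Lbar n : ℝ) / n ∧
    (Kof c Lbar n : ℝ) * (Lof Lbar n : ℝ) / n ≤ c + (Lof Lbar n : ℝ) / n := by
  have hnR : (0:ℝ) < n := by exact_mod_cast (by omega : 0 < n)
  have hL : (0:ℝ) < (Lof Lbar n : ℝ) := by exact_mod_cast Lof_pos hLbar hn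
  have harg : 0 ≤ c * (n : ℝ) / (Lof Lbar n : ℝ) := by positivity
  have hlow : c * (n : ℝ) / (Lof Lbar n : ℝ) ≤ (Kof c Lbar n : ℝ) := Nat.le_ceil _
  have hhi : (Kof c Lbar n : ℝ) < c * (n : ℝ) / (Lof Lbar n : ℝ) + 1 :=
    Nat.ceil_lt_add_one harg
  constructor
  · rw [le_div_iff₀ hnR]
    calc c * n = (c * n / Lof Lbar n) * Lof Lbar n := by field_simp
      _ ≤ (Kof c Lbar n : ℝ) * Lof Lbar n := mul_le_mul_of_nonneg_right hlow hL.le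
  · rw [div_le_iff₀ hnR]
    calc (Kof c Lbar n : ℝ) * (Lof Lbar n : ℝ)
        ≤ (c * n / Lof Lbar n + 1) * Lof Lbar n := mul_le_mul_of_nonneg_right hhi.le hL.le
      _ = c * n + Lof Lbar n := by field_simp
      _ = (c + (Lof Lbar n : ℝ) / n) * n := by field_simp

lemma tendsto_KL (hc : 0 < c) (hLbar : 0 < Lbar) :
    Tendsto (fun n : ℕ => (Kof c Lbar n : ℝ) * (Lof Lbar n : ℝ) / n) atTop (nhds c) := by
  refine tendsto_of_tendsto_of_tendsto_of_le_of_le' tendsto_const_nhds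
    (by simpa using (tendsto_L_div hLbar).const_add c) ?_ ?_
  · filter_upwards [eventually_ge_atTop 2] with n hn
    exact (KL_bounds hc hLbar hn).1
  · filter_upwards [eventually_ge_atTop 2] with n hn
    exact (KL_bounds hc hLbar hn).2

lemma tendsto_pK (hc : 0 < c) (hLbar : 0 < Lbar) (hδ0 : 0 ≤ δ) (hδ1 : δ ≤ 1) :
    Tendsto (fun n : ℕ => pK δ n (Kof c Lbar n) (Lof Lbar n)) atTop
      (nhds (Real.exp (-(c * (1 - δ))))) := by
  set b : ℕ → ℝ := fun n => (1 - δ) * ((Lof Lbar n : ℝ) / n) with hbdef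
  have hb0 : Tendsto b atTop (nhds 0) := by
    simpa using (tendsto_L_div hLbar).const_mul (1 - δ)
  have hbnn : ∀ n, 0 ≤ b n := fun n =>
    mul_nonneg (by linarith) (by positivity)
  have hbev : ∀ᶠ n : ℕ in atTop, b n < 1 / 2 := by
    have := hb0.eventually (eventually_lt_nhds (by norm_num : (0:ℝ) < 1/2))
    exact this
  have hKb : Tendsto (fun n : ℕ => (Kof c Lbar n : ℝ) * b n) atTop
      (nhds (c * (1 - δ))) := by
    have heq : ∀ n : ℕ, (Kof c Lbar n : ℝ) * b n
        = (1 - δ) * ((Kof c Lbar n : ℝ) * (Lof Lbar n : ℝ) / n) := by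
      intro n; rw [hbdef]; ring
    rw [show c * (1 - δ) = (1 - δ) * c by ring]
    exact (Tendsto.congr (fun n => (heq n).symm)) ((tendsto_KL hc hLbar).const_mul (1 - δ))
  set S : ℕ → ℝ := fun n => (Kof c Lbar n : ℝ) * Real.log (1 - b n) with hSdef
  have hS : Tendsto S atTop (nhds (-(c * (1 - δ)))) := by
    refine tendsto_of_tendsto_of_tendsto_of_le_of_le'
      (g := fun n : ℕ => (-((Kof c Lbar n : ℝ) * b n)) * (1 - b n)⁻¹)
      (h := fun n : ℕ => -((Kof c Lbar n : ℝ) * b n)) ?_ ?_ ?_ ?_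
    · have h1 : Tendsto (fun n : ℕ => (1 - b n)⁻¹) atTop (nhds 1) := by
        have := ((tendsto_const_nhds (x := (1:ℝ))).sub hb0).inv₀ (by norm_num)
        simpa using this
      have := (hKb.neg).mul h1
      simpa using this
    · exact hKb.neg
    · filter_upwards [hbev] with n hb2
      have h1b : 0 < 1 - b n := by linarith
      have hlog : -(b n * (1 - b n)⁻¹) ≤ Real.log (1 - b n) := by
        have h2 := Real.log_le_sub_one_of_pos (inv_pos.mpr h1b)
        rw [Real.log_inv] at h2
        have h3 : (1 - b n)⁻¹ - 1 = b n * (1 - b n)⁻¹ := by field_simp; ring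
        linarith
      calc -((Kof c Lbar n : ℝ) * b n) * (1 - b n)⁻¹
          = (Kof c Lbar n : ℝ) * (-(b n * (1 - b n)⁻¹)) := by ring
        _ ≤ (Kof c Lbar n : ℝ) * Real.log (1 - b n) :=
            mul_le_mul_of_nonneg_left hlog (Nat.cast_nonneg _)
    · filter_upwards [hbev] with n hb2
      have h1b : 0 < 1 - b n := by linarith
      have hlog : Real.log (1 - b n) ≤ -(b n) := by
        have := Real.log_le_sub_one_of_pos h1b
        linarith
      calc S n ≤ (Kof c Lbar n : ℝ) * (-(b n)) :=
            mul_le_mul_of_nonneg_left hlog (Nat.cast_nonneg _)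
        _ = -((Kof c Lbar n : ℝ) * b n) := by ring
  have hcongr : ∀ᶠ n : ℕ in atTop, Real.exp (S n) = pK δ n (Kof c Lbar n) (Lof Lbar n) := by
    filter_upwards [hbev, eventually_ge_atTop 2] with n hb2 hn
    have h1b : 0 < 1 - b n := by linarith
    have hnR : (0:ℝ) < n := by exact_mod_cast (by omega : 0 < n)
    have hpk : pK δ n (Kof c Lbar n) (Lof Lbar n) = (1 - b n) ^ (Kof c Lbar n) := by
      rw [pK, hbdef]
      congr 1
      field_simp
    rw [hpk]
    show Real.exp ((Kof c Lbar n : ℝ) * Real.log (1 - b n)) = _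
    rw [← Real.log_pow, Real.exp_log (pow_pos h1b _)]
  have := (Real.continuous_exp.tendsto _).comp hS
  exact Tendsto.congr' hcongr this

end Asymp

end VCC

/-- Concentration of visible coverage (Lemma 2). -/
theorem visible_coverage_concentration
    (c Lbar δ : ℝ) (hc : 0 < c) (hLbar : 0 < Lbar) (hδ0 : 0 ≤ δ) (hδ1 : δ < 1)
    (model : ∀ n : ℕ, 2 ≤ n → SSE n (Kof c Lbar n) (Lof Lbar n) δ)
    (ε : ℝ) (hε : 0 < ε) :
    Tendsto (fun n : ℕ =>
        if h : 2 ≤ n then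
          ((model n h).μ {ω |
            ε * (1 - Real.exp (-(c * (1 - δ)))) <
              |(model n h).Phi ω - (1 - Real.exp (-(c * (1 - δ))))|}).toReal
        else 0) atTop (nhds 0) := by
  classical
  set A := 1 - Real.exp (-(c * (1 - δ))) with hA
  have hδ1' : δ ≤ 1 := hδ1.le
  have hApos : 0 < A := by
    rw [hA]
    have h1 : Real.exp (-(c * (1 - δ))) < 1 := by
      rw [Real.exp_lt_one_iff]
      nlinarith
    linarith
  set t0 := ε * A / 2 with ht0def
  have ht0 : 0 < t0 := by positivity
  have hεA : ε * A = 2 * t0 := by rw [ht0def]; ring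
  have hpKlim := VCC.tendsto_pK hc hLbar hδ0 hδ1'
  have haev : ∀ᶠ n : ℕ in atTop,
      |(1 - VCC.pK δ n (Kof c Lbar n) (Lof Lbar n)) - A| < t0 := by
    have h2 := Metric.tendsto_nhds.mp hpKlim t0 ht0
    filter_upwards [h2] with n hn
    rw [Real.dist_eq] at hn
    rw [hA]
    have : (1 - VCC.pK δ n (Kof c Lbar n) (Lof Lbar n)) - (1 - Real.exp (-(c * (1 - δ))))
        = -(VCC.pK δ n (Kof c Lbar n) (Lof Lbar n) - Real.exp (-(c * (1 - δ)))) := by ring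
    rw [this, abs_neg]
    exact hn
  have h2Lev : ∀ᶠ n : ℕ in atTop, 2 * Lof Lbar n ≤ n := by
    have h3 := (VCC.tendsto_L_div hLbar).eventually
      (eventually_lt_nhds (by norm_num : (0:ℝ) < 1/2))
    filter_upwards [h3, eventually_ge_atTop 1] with n h1 h2
    have hnR : (0:ℝ) < n := by exact_mod_cast (by omega : 0 < n)
    have h4 := (div_lt_iff₀ hnR).mp h1
    have h5 : (2 * Lof Lbar n : ℝ) < n := by push_cast; linarith
    exact_mod_cast h5.le
  have hbound : ∀ᶠ n : ℕ in atTop,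
      (if h : 2 ≤ n then
          ((model n h).μ {ω |
            ε * A < |(model n h).Phi ω - A|}).toReal
        else 0) ≤ (Lof Lbar n : ℝ) ^ 2 / n / t0 ^ 2 := by
    filter_upwards [haev, h2Lev, eventually_ge_atTop 2] with n han h2L hn2
    rw [dif_pos hn2]
    haveI : NeZero n := ⟨by omega⟩
    set Kn := Kof c Lbar n with hK
    set Ln := Lof Lbar n with hL
    set M := model n hn2 with hM
    have hL1 : 0 < Ln := VCC.Lof_pos hLbar hn2
    have hPhi : ∀ ω, M.Phi ω = VCC.phiC (VCC.Vf M ω) := fun ω => rfl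
    have hsub : {ω | ε * A < |M.Phi ω - A|}
        ⊆ {ω | t0 < |VCC.phiC (VCC.Vf M ω) - (1 - VCC.pK δ n Kn Ln)|} := by
      intro ω hω
      simp only [Set.mem_setOf_eq] at hω ⊢
      rw [← hPhi ω]
      have htri := abs_sub_le (M.Phi ω) (1 - VCC.pK δ n Kn Ln) A
      have han' : |(1 - VCC.pK δ n Kn Ln) - A| < t0 := han
      linarith [hεA]
    calc (M.μ {ω | ε * A < |M.Phi ω - A|}).toReal
        ≤ (M.μ {ω | t0 < |VCC.phiC (VCC.Vf M ω) - (1 - VCC.pK δ n Kn Ln)|}).toReal :=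
          ENNReal.toReal_mono (MeasureTheory.measure_ne_top _ _) (MeasureTheory.measure_mono hsub)
      _ = ∑ x ∈ Finset.univ.filter
            (fun x : (Fin Kn → ZMod n) × (Fin Kn → Fin Ln → Bool) =>
              t0 < |VCC.phiC x - (1 - VCC.pK δ n Kn Ln)|), VCC.W δ n x :=
          VCC.meas_eq_sum M hδ0 hδ1'
            (fun x => t0 < |VCC.phiC x - (1 - VCC.pK δ n Kn Ln)|)
      _ ≤ (Ln : ℝ) ^ 2 / (n * t0 ^ 2) := VCC.cheb hδ0 hδ1' hL1 h2L ht0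
      _ = (Ln : ℝ) ^ 2 / n / t0 ^ 2 := by rw [div_div]
  have hg : Tendsto (fun n : ℕ => (Lof Lbar n : ℝ) ^ 2 / n / t0 ^ 2) atTop (nhds 0) := by
    have := (VCC.tendsto_Lsq_div hLbar).div_const (t0 ^ 2)
    simpa using this
  refine squeeze_zero' ?_ hbound hg
  filter_upwards with n
  split
  · exact ENNReal.toReal_nonneg
  · exact le_refl 0
end
end

section
/- Variance bound for the number of visibly covered positions: In the SSE model with fixed parameters n, K, L, δ, let 𝒫 denote the number of positions m ∈ Z/nZ that are visibly covered. Then Var(𝒫) ≤ E[𝒫] + n·L. -/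
open Filter

noncomputable section

variable {n K L : ℕ} {δ : ℝ}

section VarAux

open MeasureTheory ProbabilityTheory

/-- Atom sets for the decomposition of "bad" events. -/
private def atomSets (M : SSE n K L δ) (J : ZMod n → Finset (Fin L))
    (v : Fin K → ZMod n) : (Fin K ⊕ (Fin K × Fin L)) → Set M.Ω
  | .inl i => M.S i ⁻¹' {v i}
  | .inr p => if p.2 ∈ J (v p.1) then M.E p.1 p.2 ⁻¹' {true} else Set.univ

private lemma msc_zmod (hn : n ≠ 0) : MeasurableSingletonClass (ZMod n) := by
  cases n with
  | zero => exact absurd rfl hn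
  | succ k => infer_instance

/-- Key computation: probability that every read avoids (via erasures) a prescribed
set of positions depending on its start. -/
private lemma meas_bad [NeZero n] (hn : 1 ≤ n) (M : SSE n K L δ) (J : ZMod n → Finset (Fin L)) :
    M.μ {ω | ∀ i : Fin K, ∀ j ∈ J (M.S i ω), M.E i j ω = true}
      = (∑ s : ZMod n, (n : ENNReal)⁻¹ * (ENNReal.ofReal δ) ^ (J s).card) ^ K := by
  classical
  haveI := msc_zmod (n := n) (by omega)
  haveI := M.isProb
  have hZ : ∀ s : Set (ZMod n), MeasurableSet s := fun s => (Set.toFinite s).measurableSet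
  have hBo : ∀ s : Set Bool, MeasurableSet s := fun s => (Set.toFinite s).measurableSet
  set d : ENNReal := ENNReal.ofReal δ with hd
  -- measurability of atoms in the comap σ-algebras
  have hBmeas : ∀ v t,
      MeasurableSet[(sseTypeMS n K L t).comap (sseVars M.S M.E t)] (atomSets M J v t) := by
    rintro v (i | ⟨i, j⟩)
    · exact ⟨{v i}, hZ _, rfl⟩
    · by_cases h : j ∈ J (v i)
      · exact ⟨{true}, hBo _, by simp only [atomSets, if_pos h]; rfl⟩
      · exact ⟨Set.univ, MeasurableSet.univ, by simp only [atomSets, if_neg h]; rfl⟩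
  have hBmeasΩ : ∀ v t, MeasurableSet (atomSets M J v t) := by
    rintro v (i | ⟨i, j⟩)
    · exact M.measS i (hZ _)
    · dsimp only [atomSets]
      by_cases h : j ∈ J (v i)
      · rw [if_pos h]; exact M.measE i j (hBo _)
      · rw [if_neg h]; exact MeasurableSet.univ
  -- decomposition of the event into atoms
  have hunion : {ω | ∀ i : Fin K, ∀ j ∈ J (M.S i ω), M.E i j ω = true}
      = ⋃ v : Fin K → ZMod n, ⋂ t, atomSets M J v t := by
    ext ω
    simp only [Set.mem_setOf_eq, Set.mem_iUnion, Set.mem_iInter]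
    constructor
    · intro h
      refine ⟨fun i => M.S i ω, ?_⟩
      rintro (i | ⟨i, j⟩)
      · exact rfl
      · dsimp only [atomSets]
        by_cases hj : j ∈ J (M.S i ω)
        · rw [if_pos hj]; exact h i j hj
        · rw [if_neg hj]; trivial
    · rintro ⟨v, hv⟩ i j hj
      have hSi : M.S i ω = v i := hv (.inl i)
      have h2 := hv (.inr (i, j))
      dsimp only [atomSets] at h2
      rw [hSi] at hj
      rw [if_pos hj] at h2
      exact h2
  have hdisj : Pairwise (Function.onFun Disjoint fun v => ⋂ t, atomSets M J v t) := by
    intro v w hvw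
    refine Set.disjoint_left.mpr fun ω hωv hωw => hvw ?_
    funext i
    have h1 : M.S i ω = v i := Set.mem_iInter.mp hωv (.inl i)
    have h2 : M.S i ω = w i := Set.mem_iInter.mp hωw (.inl i)
    rw [← h1, h2]
  -- measure of an atom
  have hatom : ∀ v, M.μ (⋂ t, atomSets M J v t)
      = ∏ i : Fin K, ((n : ENNReal)⁻¹ * d ^ (J (v i)).card) := by
    intro v
    rw [M.indep.meas_iInter (hBmeas v), Fintype.prod_sum_type]
    have h1 : ∀ i : Fin K, M.μ (atomSets M J v (.inl i)) = (n : ENNReal)⁻¹ := fun i =>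
      M.unifS i (v i)
    have h2 : ∀ p : Fin K × Fin L, M.μ (atomSets M J v (.inr p))
        = if p.2 ∈ J (v p.1) then d else 1 := by
      rintro ⟨i, j⟩
      dsimp only [atomSets]
      by_cases h : j ∈ J (v i)
      · rw [if_pos h, if_pos h]; exact M.bernE i j
      · rw [if_neg h, if_neg h]; exact measure_univ
    simp only [h1, h2]
    rw [Fintype.prod_prod_type]
    have h3 : ∀ i : Fin K, (∏ j : Fin L, if j ∈ J (v i) then d else 1) = d ^ (J (v i)).card := by
      intro i
      rw [Finset.prod_ite_mem Finset.univ (J (v i)) (fun _ => d), Finset.univ_inter,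
        Finset.prod_const]
    simp only [h3]
    rw [← Finset.prod_mul_distrib]
  rw [hunion, measure_iUnion hdisj (fun v => MeasurableSet.iInter (hBmeasΩ v)), tsum_fintype]
  simp only [hatom]
  rw [← Fintype.piFinset_univ,
    ← Finset.prod_univ_sum (fun _ : Fin K => (Finset.univ : Finset (ZMod n)))
      (fun (_ : Fin K) (s : ZMod n) => (n : ENNReal)⁻¹ * d ^ (J s).card),
    Finset.prod_const, Finset.card_univ, Fintype.card_fin]

/-- Real version of the key computation. -/
private lemma meas_bad_real [NeZero n] (hn : 1 ≤ n) (hδ0 : 0 ≤ δ) (M : SSE n K L δ)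
    (J : ZMod n → Finset (Fin L)) :
    (M.μ {ω | ∀ i : Fin K, ∀ j ∈ J (M.S i ω), M.E i j ω = true}).toReal
      = ((∑ s : ZMod n, δ ^ (J s).card) / n) ^ K := by
  rw [meas_bad hn M J, ENNReal.toReal_pow]
  congr 1
  have hterm : ∀ s : ZMod n,
      (n : ENNReal)⁻¹ * (ENNReal.ofReal δ) ^ (J s).card ≠ ⊤ := by
    intro s
    exact ENNReal.mul_ne_top (ENNReal.inv_ne_top.mpr (by exact_mod_cast (by omega : n ≠ 0)))
      (ENNReal.pow_ne_top ENNReal.ofReal_ne_top)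
  rw [ENNReal.toReal_sum (fun s _ => hterm s)]
  rw [Finset.sum_div]
  refine Finset.sum_congr rfl fun s _ => ?_
  rw [ENNReal.toReal_mul, ENNReal.toReal_pow, ENNReal.toReal_inv, ENNReal.toReal_ofReal hδ0,
    ENNReal.toReal_natCast]
  ring

end VarAux

/-- Variance bound for the number of visibly covered positions. -/
theorem variance_coveredCount_bound
    (n K L : ℕ) (δ : ℝ) (hn : 1 ≤ n) (hK : 1 ≤ K) (hL : 1 ≤ L) (hLn : L ≤ n)
    (hδ0 : 0 ≤ δ) (hδ1 : δ < 1) (M : SSE n K L δ) :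
    ProbabilityTheory.variance (fun ω => (M.coveredCount ω : ℝ)) M.μ
      ≤ (∫ ω, (M.coveredCount ω : ℝ) ∂M.μ) + (n : ℝ) * (L : ℝ) := by
  classical
  haveI : NeZero n := ⟨by omega⟩
  haveI := msc_zmod (n := n) (by omega)
  haveI := M.isProb
  have hZm : ∀ s : Set (ZMod n), MeasurableSet s := fun s => (Set.toFinite s).measurableSet
  have hBo : ∀ s : Set Bool, MeasurableSet s := fun s => (Set.toFinite s).measurableSet
  have hnR : (0 : ℝ) < n := by exact_mod_cast (by omega : 0 < n)
  -- the covered sets and their measurability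
  set Sm : ZMod n → Set M.Ω := fun m => {ω | M.VisiblyCovered ω m} with hSmdef
  have hSmeas : ∀ m, MeasurableSet (Sm m) := by
    intro m
    have he : Sm m = ⋃ i : Fin K, ⋃ j : Fin L,
        (M.S i ⁻¹' {s | s + ((j : ℕ) : ZMod n) = m} ∩ M.E i j ⁻¹' {false}) := by
      ext ω
      simp [hSmdef, SSE.VisiblyCovered, Set.mem_iUnion]
    rw [he]
    exact MeasurableSet.iUnion fun i => MeasurableSet.iUnion fun j =>
      (M.measS i (hZm _)).inter (M.measE i j (hBo _))
  -- window finsets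
  set Jm : ZMod n → ZMod n → Finset (Fin L) :=
    fun m s => Finset.univ.filter (fun j : Fin L => s + ((j : ℕ) : ZMod n) = m) with hJmdef
  -- complements of covered events as "bad" events
  have hNm : ∀ m, {ω | ∀ i : Fin K, ∀ j ∈ Jm m (M.S i ω), M.E i j ω = true} = (Sm m)ᶜ := by
    intro m
    ext ω
    simp only [hSmdef, hJmdef, Set.mem_setOf_eq, Set.mem_compl_iff, SSE.VisiblyCovered,
      Finset.mem_filter, Finset.mem_univ, true_and, not_exists, not_and, Bool.not_eq_false]
  have hNm2 : ∀ m m',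
      {ω | ∀ i : Fin K, ∀ j ∈ (Jm m (M.S i ω) ∪ Jm m' (M.S i ω)), M.E i j ω = true}
        = (Sm m)ᶜ ∩ (Sm m')ᶜ := by
    intro m m'
    rw [← hNm m, ← hNm m']
    ext ω
    simp only [Set.mem_setOf_eq, Set.mem_inter_iff, Finset.mem_union]
    constructor
    · exact fun h => ⟨fun i j hj => h i j (Or.inl hj), fun i j hj => h i j (Or.inr hj)⟩
    · rintro ⟨h1, h2⟩ i j (hj | hj)
      · exact h1 i j hj
      · exact h2 i j hj
  -- the q quantities
  set q : (ZMod n → Finset (Fin L)) → ℝ := fun J => (∑ s : ZMod n, δ ^ (J s).card) / n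
    with hqdef
  have hx : ∀ m, (M.μ (Sm m)ᶜ).toReal = q (Jm m) ^ K := by
    intro m
    rw [← hNm m, hqdef]
    exact meas_bad_real hn hδ0 M _
  have hz : ∀ m m', (M.μ ((Sm m)ᶜ ∩ (Sm m')ᶜ)).toReal
      = q (fun s => Jm m s ∪ Jm m' s) ^ K := by
    intro m m'
    rw [← hNm2 m m', hqdef]
    exact meas_bad_real hn hδ0 M (fun s => Jm m s ∪ Jm m' s)
  have hq0 : ∀ J, 0 ≤ q J := by
    intro J
    rw [hqdef]
    exact div_nonneg (Finset.sum_nonneg fun s _ => pow_nonneg hδ0 _) hnR.le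
  have hq1 : ∀ J, q J ≤ 1 := by
    intro J
    rw [hqdef]
    rw [div_le_one hnR]
    calc (∑ s : ZMod n, δ ^ (J s).card) ≤ ∑ _s : ZMod n, (1 : ℝ) :=
          Finset.sum_le_sum fun s _ => pow_le_one₀ hδ0 hδ1.le
      _ = n := by rw [Finset.sum_const, Finset.card_univ, ZMod.card, nsmul_eq_mul, mul_one]
  have hqsum : ∀ m m', (∀ s, Jm m s = ∅ ∨ Jm m' s = ∅) →
      q (fun s => Jm m s ∪ Jm m' s) = q (Jm m) + q (Jm m') - 1 := by
    intro m m' hdis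
    have hpt : ∀ s : ZMod n, δ ^ ((Jm m s ∪ Jm m' s).card)
        = δ ^ (Jm m s).card + δ ^ (Jm m' s).card - 1 := by
      intro s
      rcases hdis s with h | h <;> simp [h]
    rw [hqdef]
    simp only []
    rw [Finset.sum_congr rfl fun s _ => hpt s]
    rw [Finset.sum_sub_distrib, Finset.sum_add_distrib, Finset.sum_const, Finset.card_univ,
      ZMod.card, nsmul_eq_mul, mul_one]
    field_simp
  -- integral quantities
  set Q : ZMod n → ℝ := fun m => (M.μ (Sm m)).toReal with hQdef
  set R : ZMod n → ZMod n → ℝ := fun m m' => (M.μ (Sm m ∩ Sm m')).toReal with hRdef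
  have hQx : ∀ m, Q m + (M.μ (Sm m)ᶜ).toReal = 1 := by
    intro m
    rw [hQdef]
    rw [← ENNReal.toReal_add (MeasureTheory.measure_ne_top _ _) (MeasureTheory.measure_ne_top _ _),
      MeasureTheory.measure_add_measure_compl (hSmeas m), MeasureTheory.measure_univ, ENNReal.toReal_one]
  have hQ0 : ∀ m, 0 ≤ Q m := fun m => ENNReal.toReal_nonneg
  have hQ1 : ∀ m, Q m ≤ 1 := by
    intro m
    have h := hQx m
    have h2 : 0 ≤ (M.μ (Sm m)ᶜ).toReal := ENNReal.toReal_nonneg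
    linarith
  have hIE : ∀ m m', (M.μ ((Sm m)ᶜ ∪ (Sm m')ᶜ)).toReal + (M.μ ((Sm m)ᶜ ∩ (Sm m')ᶜ)).toReal
      = (M.μ (Sm m)ᶜ).toReal + (M.μ (Sm m')ᶜ).toReal := by
    intro m m'
    rw [← ENNReal.toReal_add (MeasureTheory.measure_ne_top _ _) (MeasureTheory.measure_ne_top _ _),
      ← ENNReal.toReal_add (MeasureTheory.measure_ne_top _ _) (MeasureTheory.measure_ne_top _ _),
      MeasureTheory.measure_union_add_inter _ (hSmeas m').compl]
  have hRu : ∀ m m', (M.μ ((Sm m)ᶜ ∪ (Sm m')ᶜ)).toReal + R m m' = 1 := by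
    intro m m'
    have hset : Sm m ∩ Sm m' = ((Sm m)ᶜ ∪ (Sm m')ᶜ)ᶜ := by
      rw [Set.compl_union, compl_compl, compl_compl]
    rw [hRdef]
    simp only []
    rw [hset, ← ENNReal.toReal_add (MeasureTheory.measure_ne_top _ _) (MeasureTheory.measure_ne_top _ _),
      MeasureTheory.measure_add_measure_compl ((hSmeas m).compl.union (hSmeas m').compl),
      MeasureTheory.measure_univ, ENNReal.toReal_one]
  -- closeness relation
  set Close : ZMod n → ZMod n → Prop :=
    fun m m' => ∃ j j' : Fin L, m + ((j' : ℕ) : ZMod n) - ((j : ℕ) : ZMod n) = m'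
    with hCdef
  -- pointwise covariance bound
  have hpt : ∀ m m', R m m' - Q m * Q m'
      ≤ (if m' = m then Q m else 0) + (if Close m m' then (4 : ℝ)⁻¹ else 0) := by
    intro m m'
    by_cases hd : m' = m
    · subst hd
      rw [if_pos rfl]
      have hRmm : R m' m' = Q m' := by
        rw [hRdef, hQdef]
        simp only []
        rw [Set.inter_self]
      have hite : (0:ℝ) ≤ if Close m' m' then (4:ℝ)⁻¹ else 0 := by
        split <;> norm_num
      nlinarith [hQ0 m', mul_self_nonneg (Q m')]
    · rw [if_neg hd]
      by_cases hc : Close m m'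
      · rw [if_pos hc]
        have hR1 : R m m' ≤ Q m := by
          rw [hRdef, hQdef]
          exact ENNReal.toReal_mono (MeasureTheory.measure_ne_top _ _) (MeasureTheory.measure_mono Set.inter_subset_left)
        have hR2 : R m m' ≤ Q m' := by
          rw [hRdef, hQdef]
          exact ENNReal.toReal_mono (MeasureTheory.measure_ne_top _ _) (MeasureTheory.measure_mono Set.inter_subset_right)
        rcases le_total (Q m) (Q m') with h | h
        · nlinarith [sq_nonneg (Q m - 1/2), mul_le_mul_of_nonneg_left h (hQ0 m)]
        · nlinarith [sq_nonneg (Q m' - 1/2), mul_le_mul_of_nonneg_left h (hQ0 m')]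
      · rw [if_neg hc]
        -- far case: disjoint windows
        have hdis : ∀ s, Jm m s = ∅ ∨ Jm m' s = ∅ := by
          intro s
          by_contra hcon
          push_neg at hcon
          obtain ⟨h1, h2⟩ := hcon
          obtain ⟨j, hj⟩ := h1
          obtain ⟨j', hj'⟩ := h2
          rw [hJmdef] at hj hj'
          simp only [Finset.mem_filter, Finset.mem_univ, true_and] at hj hj'
          exact hc ⟨j, j', by rw [← hj, ← hj']; ring⟩
        have hqle : q (fun s => Jm m s ∪ Jm m' s) ≤ q (Jm m) * q (Jm m') := by
          rw [hqsum m m' hdis]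
          nlinarith [hq1 (Jm m), hq1 (Jm m')]
        have hzxy : (M.μ ((Sm m)ᶜ ∩ (Sm m')ᶜ)).toReal
            ≤ (M.μ (Sm m)ᶜ).toReal * (M.μ (Sm m')ᶜ).toReal := by
          rw [hz m m', hx m, hx m', ← mul_pow]
          exact pow_le_pow_left₀ (hq0 _) hqle K
        have h1 : Q m = 1 - (M.μ (Sm m)ᶜ).toReal := by linarith [hQx m]
        have h2 : Q m' = 1 - (M.μ (Sm m')ᶜ).toReal := by linarith [hQx m']
        have h3 : R m m' = 1 - (M.μ ((Sm m)ᶜ ∪ (Sm m')ᶜ)).toReal := by linarith [hRu m m']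
        have h4 := hIE m m'
        have key : R m m' - Q m * Q m'
            = (M.μ ((Sm m)ᶜ ∩ (Sm m')ᶜ)).toReal
              - (M.μ (Sm m)ᶜ).toReal * (M.μ (Sm m')ᶜ).toReal := by
          rw [h1, h2, h3]
          nlinarith [h4]
        rw [key]
        norm_num
        linarith [hzxy]
  -- counting close positions
  have hcount : ∀ m, ((Finset.univ.filter (fun m' => Close m m')).card : ℝ) ≤ 2 * L := by
    intro m
    have hsub : Finset.univ.filter (fun m' => Close m m') ⊆
        (Finset.Icc (-(L : ℤ) + 1) ((L : ℤ) - 1)).image (fun z : ℤ => m + (z : ZMod n)) := by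
      intro m' hm'
      rw [Finset.mem_filter] at hm'
      obtain ⟨j, j', he⟩ := hm'.2
      refine Finset.mem_image.mpr ⟨(j' : ℤ) - (j : ℤ), ?_, ?_⟩
      · rw [Finset.mem_Icc]
        have h1 : (j : ℤ) < L := by exact_mod_cast j.isLt
        have h2 : (j' : ℤ) < L := by exact_mod_cast j'.isLt
        have h3 : (0 : ℤ) ≤ (j : ℤ) := Int.natCast_nonneg _
        have h4 : (0 : ℤ) ≤ (j' : ℤ) := Int.natCast_nonneg _
        omega
      · rw [← he]
        push_cast
        ring
    have h1 := Finset.card_le_card hsub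
    have h2 := Finset.card_image_le (s := Finset.Icc (-(L : ℤ) + 1) ((L : ℤ) - 1))
      (f := fun z : ℤ => m + (z : ZMod n))
    have h3 : (Finset.Icc (-(L : ℤ) + 1) ((L : ℤ) - 1)).card = 2 * L - 1 := by
      rw [Int.card_Icc]
      omega
    have h4 : (Finset.univ.filter (fun m' => Close m m')).card ≤ 2 * L := by omega
    exact_mod_cast h4
  -- indicators
  set F : ZMod n → M.Ω → ℝ := fun m => (Sm m).indicator (fun _ => 1) with hFdef
  have hXF : ∀ ω, (M.coveredCount ω : ℝ) = ∑ m : ZMod n, F m ω := by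
    intro ω
    have hcc : M.coveredCount ω
        = (Finset.univ.filter (fun m => M.VisiblyCovered ω m)).card := by
      rw [SSE.coveredCount, Set.ncard_eq_toFinset_card']
      congr 1
      ext m
      simp
    rw [hcc, Finset.card_filter]
    push_cast
    refine Finset.sum_congr rfl fun m _ => ?_
    rw [hFdef]
    by_cases h : M.VisiblyCovered ω m <;>
      simp [Set.indicator_apply, hSmdef, h]
  have hFint : ∀ m, MeasureTheory.Integrable (F m) M.μ := by
    intro m
    rw [hFdef]
    exact (MeasureTheory.integrable_const 1).indicator (hSmeas m)
  have hFInt : ∀ m, ∫ ω, F m ω ∂M.μ = Q m := by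
    intro m
    rw [hFdef, hQdef]
    simpa [MeasureTheory.measureReal_def] using MeasureTheory.integral_indicator_const (μ := M.μ) (1 : ℝ) (hSmeas m)
  have hFmul : ∀ m m', (fun ω => F m ω * F m' ω)
      = (Sm m ∩ Sm m').indicator (fun _ => (1 : ℝ)) := by
    intro m m'
    funext ω
    rw [hFdef]
    by_cases h1 : ω ∈ Sm m <;> by_cases h2 : ω ∈ Sm m' <;>
      simp [Set.indicator_apply, h1, h2, Set.mem_inter_iff]
  have hFmulint : ∀ m m', MeasureTheory.Integrable (fun ω => F m ω * F m' ω) M.μ := by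
    intro m m'
    rw [hFmul]
    exact (MeasureTheory.integrable_const 1).indicator ((hSmeas m).inter (hSmeas m'))
  have hFmulInt : ∀ m m', ∫ ω, F m ω * F m' ω ∂M.μ = R m m' := by
    intro m m'
    rw [hFmul, hRdef]
    simpa [MeasureTheory.measureReal_def] using MeasureTheory.integral_indicator_const (μ := M.μ) (1 : ℝ) ((hSmeas m).inter (hSmeas m'))
  -- measurability and Memℒp
  have hXmeas : Measurable (fun ω => ∑ m : ZMod n, F m ω) := by
    refine Finset.measurable_sum _ fun m _ => ?_
    rw [hFdef]
    exact measurable_const.indicator (hSmeas m)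
  have hXeq : (fun ω => (M.coveredCount ω : ℝ)) = fun ω => ∑ m : ZMod n, F m ω :=
    funext hXF
  have hmem : MeasureTheory.MemLp (fun ω => (M.coveredCount ω : ℝ)) 2 M.μ := by
    refine MeasureTheory.MemLp.of_bound ?_ (n : ℝ) (Filter.Eventually.of_forall fun ω => ?_)
    · rw [hXeq]
      exact hXmeas.aestronglyMeasurable
    · rw [Real.norm_eq_abs, abs_of_nonneg (by positivity)]
      have h1 : M.coveredCount ω ≤ n := by
        have h2 := Set.ncard_le_ncard (Set.subset_univ {m | M.VisiblyCovered ω m})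
          Set.finite_univ
        rwa [Set.ncard_univ, Nat.card_eq_fintype_card, ZMod.card] at h2
      exact_mod_cast h1
  rw [ProbabilityTheory.variance_eq_sub hmem]
  -- compute the integrals
  have hIX : ∫ ω, (M.coveredCount ω : ℝ) ∂M.μ = ∑ m : ZMod n, Q m := by
    simp only [hXF]
    rw [MeasureTheory.integral_finset_sum _ fun m _ => hFint m]
    exact Finset.sum_congr rfl fun m _ => hFInt m
  have hIX2 : ∫ ω, ((fun ω => (M.coveredCount ω : ℝ)) ^ 2) ω ∂M.μ
      = ∑ m : ZMod n, ∑ m' : ZMod n, R m m' := by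
    have hsq : ∀ ω, ((fun ω => (M.coveredCount ω : ℝ)) ^ 2) ω
        = ∑ m : ZMod n, ∑ m' : ZMod n, F m ω * F m' ω := by
      intro ω
      simp only [Pi.pow_apply]
      rw [sq, hXF ω, Finset.sum_mul_sum]
    simp only [hsq]
    rw [MeasureTheory.integral_finset_sum _ fun m _ =>
      MeasureTheory.integrable_finset_sum _ fun m' _ => hFmulint m m']
    refine Finset.sum_congr rfl fun m _ => ?_
    rw [MeasureTheory.integral_finset_sum _ fun m' _ => hFmulint m m']
    exact Finset.sum_congr rfl fun m' _ => hFmulInt m m'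
  rw [hIX2, hIX]
  have hsq2 : (∑ m : ZMod n, Q m) ^ 2 = ∑ m : ZMod n, ∑ m' : ZMod n, Q m * Q m' := by
    rw [sq, Finset.sum_mul_sum]
  rw [hsq2, ← Finset.sum_sub_distrib]
  simp only [← Finset.sum_sub_distrib]
  -- per-row bound
  have key : ∀ m, (∑ m' : ZMod n, (R m m' - Q m * Q m')) ≤ Q m + L := by
    intro m
    calc (∑ m' : ZMod n, (R m m' - Q m * Q m'))
        ≤ ∑ m' : ZMod n, ((if m' = m then Q m else 0) + (if Close m m' then (4:ℝ)⁻¹ else 0)) :=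
          Finset.sum_le_sum fun m' _ => hpt m m'
      _ = Q m + ((Finset.univ.filter (fun m' => Close m m')).card : ℝ) * (4:ℝ)⁻¹ := by
          rw [Finset.sum_add_distrib, Finset.sum_ite_eq' Finset.univ m (fun _ => Q m)]
          rw [← Finset.sum_filter, Finset.sum_const, nsmul_eq_mul]
          simp
      _ ≤ Q m + L := by
          have hc := hcount m
          have hL0 : (0:ℝ) ≤ L := by positivity
          nlinarith
  calc (∑ m : ZMod n, ∑ m' : ZMod n, (R m m' - Q m * Q m'))
      ≤ ∑ m : ZMod n, (Q m + L) := Finset.sum_le_sum fun m _ => key m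
    _ = (∑ m : ZMod n, Q m) + (n : ℝ) * L := by
        rw [Finset.sum_add_distrib, Finset.sum_const, Finset.card_univ, ZMod.card,
          nsmul_eq_mul]
end
end
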